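/- arXiv:2310.16555 — 4 statements merged into one kernel-verified Lean document; each statement's English description precedes it below -/
import Mathlib

section
/- Let q(x,y,t_X,t_Y) = p(x,y) q(t_X|x) q(t_Y|y) be a joint distribution on X×Y×T_X×T_Y satisfying the Markov chain T_X − X − Y − T_Y. Then I_q(X,Y;T_X,T_Y) = I_q(X;T_X) + I_q(Y;T_Y) − I_q(T_X;T_Y). -/
noncomputable section

/-- `p` is a probability distribution on the finite set `X × Y`. -/
def IsJointDist {X Y : Type} [Fintype X] [Fintype Y] (p : X → Y → ℝ) : Prop :=
  (∀ x y, 0 ≤ p x y) ∧ (∑ x, ∑ y, p x y) = 1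

/-- Marginal distribution `p(X)`. -/
def margX {X Y : Type} [Fintype Y] (p : X → Y → ℝ) (x : X) : ℝ := ∑ y, p x y

/-- Marginal distribution `p(Y)`. -/
def margY {X Y : Type} [Fintype X] (p : X → Y → ℝ) (y : Y) : ℝ := ∑ x, p x y

/-- Mutual information `I(X;Y)`. -/
def miXY {X Y : Type} [Fintype X] [Fintype Y] (p : X → Y → ℝ) : ℝ :=
  ∑ x, ∑ y, p x y * Real.log (p x y / (margX p x * margY p y))

/-- A channel from `A` to the countable space `ℕ`. -/
def IsChannelNat {A : Type} (κ : A → ℕ → ℝ) : Prop :=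
  (∀ a t, 0 ≤ κ a t) ∧ ∀ a, (∑' t, κ a t) = 1

/-- The joint distribution `p(X,Y)` as a weight on `X × Y`. -/
def jointW {X Y : Type} (p : X → Y → ℝ) : X × Y → ℝ := fun a => p a.1 a.2

/-- The product of the marginals `p(X)p(Y)` as a weight on `X × Y`. -/
def splitW {X Y : Type} [Fintype X] [Fintype Y] (p : X → Y → ℝ) : X × Y → ℝ :=
  fun a => margX p a.1 * margY p a.2

/-- The split channel `κ_X ⊗ κ_Y` from `X × Y` to `T_X × T_Y`. -/
def tens2 {X Y : Type} (κX : X → ℕ → ℝ) (κY : Y → ℕ → ℝ) : X × Y → ℕ × ℕ → ℝ :=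
  fun a s => κX a.1 s.1 * κY a.2 s.2

/-- Pushforward of a weight `w` on `X × Y` through a channel to `T_X × T_Y`. -/
def push2 {X Y : Type} [Fintype X] [Fintype Y] (w : X × Y → ℝ)
    (κ : X × Y → ℕ × ℕ → ℝ) (s : ℕ × ℕ) : ℝ :=
  ∑ a : X × Y, w a * κ a s

/-- Kullback–Leibler divergence between distributions on `T_X × T_Y`. -/
def klNN (u v : ℕ × ℕ → ℝ) : ℝ := ∑' s : ℕ × ℕ, u s * Real.log (u s / v s)

/-- Mutual information `I_κ(X,Y;T)` between the input (distributed as `w`) and the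
output of a channel `κ` from `X × Y` to `T_X × T_Y`. -/
def mi2 {X Y : Type} [Fintype X] [Fintype Y] (w : X × Y → ℝ)
    (κ : X × Y → ℕ × ℕ → ℝ) : ℝ :=
  ∑ a : X × Y, ∑' s : ℕ × ℕ, w a * κ a s * Real.log (κ a s / push2 w κ s)

/-- Marginal `q(T_X)` of the joint `q(x,y,t_X,t_Y) = p(x,y) q(t_X|x) q(t_Y|y)`. -/
def margTX {X Y : Type} [Fintype X] [Fintype Y] (p : X → Y → ℝ)
    (qX : X → ℕ → ℝ) (t : ℕ) : ℝ :=
  ∑ x, margX p x * qX x t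

/-- Marginal `q(T_Y)` of the joint `q(x,y,t_X,t_Y) = p(x,y) q(t_X|x) q(t_Y|y)`. -/
def margTY {X Y : Type} [Fintype X] [Fintype Y] (p : X → Y → ℝ)
    (qY : Y → ℕ → ℝ) (t : ℕ) : ℝ :=
  ∑ y, margY p y * qY y t

/-- Marginal `q(T_X,T_Y)` of the joint `q(x,y,t_X,t_Y) = p(x,y) q(t_X|x) q(t_Y|y)`. -/
def margTT {X Y : Type} [Fintype X] [Fintype Y] (p : X → Y → ℝ)
    (qX : X → ℕ → ℝ) (qY : Y → ℕ → ℝ) (s : ℕ × ℕ) : ℝ :=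
  ∑ x, ∑ y, p x y * qX x s.1 * qY y s.2

/-- Mutual information `I_q(X;T_X)`. -/
def miXTX {X Y : Type} [Fintype X] [Fintype Y] (p : X → Y → ℝ)
    (qX : X → ℕ → ℝ) : ℝ :=
  ∑ x, ∑' t, margX p x * qX x t * Real.log (qX x t / margTX p qX t)

/-- Mutual information `I_q(Y;T_Y)`. -/
def miYTY {X Y : Type} [Fintype X] [Fintype Y] (p : X → Y → ℝ)
    (qY : Y → ℕ → ℝ) : ℝ :=
  ∑ y, ∑' t, margY p y * qY y t * Real.log (qY y t / margTY p qY t)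

/-- Mutual information `I_q(T_X;T_Y)`. -/
def miTT {X Y : Type} [Fintype X] [Fintype Y] (p : X → Y → ℝ)
    (qX : X → ℕ → ℝ) (qY : Y → ℕ → ℝ) : ℝ :=
  ∑' s : ℕ × ℕ, margTT p qX qY s *
    Real.log (margTT p qX qY s / (margTX p qX s.1 * margTY p qY s.2))

/-- Auxiliary: a nonnegative function with tsum one is summable. -/
lemma summable_of_tsum_eq_one' {f : ℕ → ℝ} (h : ∑' t, f t = 1) : Summable f := by
  by_contra hs
  rw [tsum_eq_zero_of_not_summable hs] at h
  norm_num at h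

/-- Auxiliary: KL-type summability. If `0 ≤ a`, `c * a ≤ m` with `0 < c ≤ 1`, and
`a`, `m` are summable, then `a * log (a / m)` is summable. -/
lemma summable_mulLog' {ι : Type*} {a m : ι → ℝ} {c : ℝ} (hc : 0 < c) (hc1 : c ≤ 1)
    (ha : ∀ i, 0 ≤ a i) (hm : ∀ i, c * a i ≤ m i)
    (hsa : Summable a) (hsm : Summable m) :
    Summable fun i => a i * Real.log (a i / m i) := by
  have hK : 0 ≤ Real.log c⁻¹ := Real.log_nonneg (one_le_inv_iff₀.2 ⟨hc, hc1⟩)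
  have hm0 : ∀ i, 0 ≤ m i := fun i => le_trans (mul_nonneg hc.le (ha i)) (hm i)
  have hbound : ∀ i, |a i * Real.log (a i / m i)| ≤ m i + a i * Real.log c⁻¹ := by
    intro i
    rcases eq_or_lt_of_le (ha i) with h0 | hai
    · rw [← h0]
      simp only [zero_mul, abs_zero]
      have : (0:ℝ) ≤ 0 * Real.log c⁻¹ := by simp
      nlinarith [hm0 i]
    · have hmi : 0 < m i := lt_of_lt_of_le (mul_pos hc hai) (hm i)
      have hupper : a i * Real.log (a i / m i) ≤ a i * Real.log c⁻¹ := by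
        apply mul_le_mul_of_nonneg_left _ hai.le
        apply Real.log_le_log (div_pos hai hmi)
        rw [div_le_iff₀ hmi]
        calc a i = c⁻¹ * (c * a i) := by field_simp
          _ ≤ c⁻¹ * m i := by
              apply mul_le_mul_of_nonneg_left (hm i) (inv_nonneg.2 hc.le)
      have hlower : -(m i) ≤ a i * Real.log (a i / m i) := by
        have h1 : Real.log (m i / a i) ≤ m i / a i - 1 :=
          Real.log_le_sub_one_of_pos (div_pos hmi hai)
        have h2 : Real.log (a i / m i) = -Real.log (m i / a i) := by
          rw [Real.log_div hai.ne' hmi.ne', Real.log_div hmi.ne' hai.ne']; ring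
        have h3 : a i * (m i / a i - 1) = m i - a i := by field_simp
        nlinarith [mul_le_mul_of_nonneg_left h1 hai.le]
      rw [abs_le]
      constructor
      · nlinarith
      · nlinarith
  have habs : Summable fun i => |a i * Real.log (a i / m i)| :=
    Summable.of_nonneg_of_le (fun i => abs_nonneg _) hbound
      (hsm.add (hsa.mul_right _))
  exact habs.of_abs

set_option maxHeartbeats 2000000 in
/-- Let `q(x,y,t_X,t_Y) = p(x,y) q(t_X|x) q(t_Y|y)` be a joint
distribution on `X × Y × T_X × T_Y` (which, by this product form, satisfies the
Markov chain `T_X − X − Y − T_Y`). Then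
`I_q(X,Y;T_X,T_Y) = I_q(X;T_X) + I_q(Y;T_Y) − I_q(T_X;T_Y)`. -/
theorem mi_chain_rule_split_channels {X Y : Type} [Fintype X] [Fintype Y]
    (p : X → Y → ℝ) (hp : IsJointDist p)
    (qX : X → ℕ → ℝ) (qY : Y → ℕ → ℝ)
    (hqX : IsChannelNat qX) (hqY : IsChannelNat qY) :
    mi2 (jointW p) (tens2 qX qY) = miXTX p qX + miYTY p qY - miTT p qX qY := by
  obtain ⟨hp0, hp1⟩ := hp
  obtain ⟨hqX0, hqX1⟩ := hqX
  obtain ⟨hqY0, hqY1⟩ := hqY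
  have hSqX : ∀ x, Summable (qX x) := fun x => summable_of_tsum_eq_one' (hqX1 x)
  have hSqY : ∀ y, Summable (qY y) := fun y => summable_of_tsum_eq_one' (hqY1 y)
  have hmX0 : ∀ x, 0 ≤ margX p x := fun x => Finset.sum_nonneg fun y _ => hp0 x y
  have hmY0 : ∀ y, 0 ≤ margY p y := fun y => Finset.sum_nonneg fun x _ => hp0 x y
  have hmX1 : ∀ x, margX p x ≤ 1 := by
    intro x
    rw [← hp1]
    exact Finset.single_le_sum (f := fun x' => margX p x') (fun i _ => hmX0 i)
      (Finset.mem_univ x)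
  have hmY1 : ∀ y, margY p y ≤ 1 := by
    intro y
    rw [← hp1, Finset.sum_comm]
    exact Finset.single_le_sum (f := fun y' => margY p y') (fun i _ => hmY0 i)
      (Finset.mem_univ y)
  have hpmX : ∀ x y, p x y ≤ margX p x := fun x y =>
    Finset.single_le_sum (fun i _ => hp0 x i) (Finset.mem_univ y)
  have hpmY : ∀ x y, p x y ≤ margY p y := fun x y =>
    Finset.single_le_sum (fun i _ => hp0 i y) (Finset.mem_univ x)
  have hp_le1 : ∀ x y, p x y ≤ 1 := fun x y => le_trans (hpmX x y) (hmX1 x)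
  -- margTX / margTY facts
  have hSmTX : Summable (margTX p qX) := by
    have : ∀ x ∈ Finset.univ, Summable fun t => margX p x * qX x t :=
      fun x _ => (hSqX x).mul_left _
    exact summable_sum this
  have hSmTY : Summable (margTY p qY) := by
    have : ∀ y ∈ Finset.univ, Summable fun t => margY p y * qY y t :=
      fun y _ => (hSqY y).mul_left _
    exact summable_sum this
  have hleTX : ∀ x t, margX p x * qX x t ≤ margTX p qX t := fun x t =>
    Finset.single_le_sum (fun i _ => mul_nonneg (hmX0 i) (hqX0 i t))
      (Finset.mem_univ x)
  have hleTY : ∀ y t, margY p y * qY y t ≤ margTY p qY t := fun y t =>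
    Finset.single_le_sum (fun i _ => mul_nonneg (hmY0 i) (hqY0 i t))
      (Finset.mem_univ y)
  -- margTT facts
  have hu0 : ∀ x y (s : ℕ × ℕ), 0 ≤ p x y * qX x s.1 * qY y s.2 := fun x y s =>
    mul_nonneg (mul_nonneg (hp0 x y) (hqX0 x s.1)) (hqY0 y s.2)
  have hSuxy : ∀ x y, Summable fun s : ℕ × ℕ => p x y * qX x s.1 * qY y s.2 := by
    intro x y
    have h1 : Summable fun t => ‖qX x t‖ := by
      simpa [Real.norm_eq_abs] using (hSqX x).abs
    have h2 : Summable fun t => ‖qY y t‖ := by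
      simpa [Real.norm_eq_abs] using (hSqY y).abs
    have h3 := summable_mul_of_summable_norm h1 h2
    exact (h3.mul_left (p x y)).congr fun s => by ring
  have hSmTT : Summable (margTT p qX qY) := by
    have : ∀ x ∈ Finset.univ, Summable fun s : ℕ × ℕ =>
        ∑ y, p x y * qX x s.1 * qY y s.2 :=
      fun x _ => summable_sum fun y _ => hSuxy x y
    exact summable_sum this
  have hleTT : ∀ x y (s : ℕ × ℕ),
      p x y * qX x s.1 * qY y s.2 ≤ margTT p qX qY s := by
    intro x y s
    have h2 : p x y * qX x s.1 * qY y s.2 ≤ ∑ y', p x y' * qX x s.1 * qY y' s.2 :=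
      Finset.single_le_sum (fun i _ => hu0 x i s) (Finset.mem_univ y)
    have h1 : (∑ y', p x y' * qX x s.1 * qY y' s.2) ≤ margTT p qX qY s :=
      Finset.single_le_sum
        (f := fun x' => ∑ y', p x' y' * qX x' s.1 * qY y' s.2)
        (fun i _ => Finset.sum_nonneg fun j _ => hu0 i j s) (Finset.mem_univ x)
    exact le_trans h2 h1
  -- push2 equals margTT
  have hpush : push2 (jointW p) (tens2 qX qY) = margTT p qX qY := by
    funext s
    simp only [push2, jointW, tens2, margTT, Fintype.sum_prod_type]
    exact Finset.sum_congr rfl fun x _ => Finset.sum_congr rfl fun y _ => by ring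
  -- summability of the four families
  have hSL : ∀ x y, Summable fun s : ℕ × ℕ =>
      p x y * qX x s.1 * qY y s.2 *
        Real.log (qX x s.1 * qY y s.2 / margTT p qX qY s) := by
    intro x y
    rcases eq_or_lt_of_le (hp0 x y) with h0 | hpos
    · apply Summable.congr (f := fun _ : ℕ × ℕ => (0:ℝ)) summable_zero
      intro s
      rw [← h0]
      ring
    · have hsa : Summable fun s : ℕ × ℕ => qX x s.1 * qY y s.2 := by
        have h1 : Summable fun t => ‖qX x t‖ := by
          simpa [Real.norm_eq_abs] using (hSqX x).abs
        have h2 : Summable fun t => ‖qY y t‖ := by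
          simpa [Real.norm_eq_abs] using (hSqY y).abs
        exact summable_mul_of_summable_norm h1 h2
      have hm : ∀ s : ℕ × ℕ, p x y * (qX x s.1 * qY y s.2) ≤ margTT p qX qY s := by
        intro s
        calc p x y * (qX x s.1 * qY y s.2) = p x y * qX x s.1 * qY y s.2 := by ring
          _ ≤ margTT p qX qY s := hleTT x y s
      have := summable_mulLog' hpos (hp_le1 x y)
        (fun s : ℕ × ℕ => mul_nonneg (hqX0 x s.1) (hqY0 y s.2)) hm hsa hSmTT
      exact (this.mul_left (p x y)).congr fun s => by ring
  have hSh1 : ∀ x y, Summable fun t =>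
      p x y * qX x t * Real.log (qX x t / margTX p qX t) := by
    intro x y
    rcases eq_or_lt_of_le (hp0 x y) with h0 | hpos
    · apply Summable.congr (f := fun _ : ℕ => (0:ℝ)) summable_zero
      intro t
      rw [← h0]
      ring
    · have hcpos : 0 < margX p x := lt_of_lt_of_le hpos (hpmX x y)
      have := summable_mulLog' hcpos (hmX1 x) (hqX0 x) (hleTX x) (hSqX x) hSmTX
      exact (this.mul_left (p x y)).congr fun t => by ring
  have hSh2 : ∀ x y, Summable fun t =>
      p x y * qY y t * Real.log (qY y t / margTY p qY t) := by
    intro x y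
    rcases eq_or_lt_of_le (hp0 x y) with h0 | hpos
    · apply Summable.congr (f := fun _ : ℕ => (0:ℝ)) summable_zero
      intro t
      rw [← h0]
      ring
    · have hcpos : 0 < margY p y := lt_of_lt_of_le hpos (hpmY x y)
      have := summable_mulLog' hcpos (hmY1 y) (hqY0 y) (hleTY y) (hSqY y) hSmTY
      exact (this.mul_left (p x y)).congr fun t => by ring
  have hS1 : ∀ x y, Summable fun s : ℕ × ℕ =>
      p x y * qX x s.1 * qY y s.2 * Real.log (qX x s.1 / margTX p qX s.1) := by
    intro x y
    have h1 : Summable fun t =>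
        ‖p x y * qX x t * Real.log (qX x t / margTX p qX t)‖ := by
      simpa only [Real.norm_eq_abs] using (hSh1 x y).abs
    have h2 : Summable fun t => ‖qY y t‖ := by
      simpa [Real.norm_eq_abs] using (hSqY y).abs
    exact (summable_mul_of_summable_norm h1 h2).congr fun s => by ring
  have hS2 : ∀ x y, Summable fun s : ℕ × ℕ =>
      p x y * qX x s.1 * qY y s.2 * Real.log (qY y s.2 / margTY p qY s.2) := by
    intro x y
    have h1 : Summable fun t => ‖qX x t‖ := by
      simpa [Real.norm_eq_abs] using (hSqX x).abs
    have h2 : Summable fun t =>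
        ‖p x y * qY y t * Real.log (qY y t / margTY p qY t)‖ := by
      simpa only [Real.norm_eq_abs] using (hSh2 x y).abs
    exact (summable_mul_of_summable_norm h1 h2).congr fun s => by ring
  -- the pointwise log identity
  have hptwise : ∀ x y (s : ℕ × ℕ),
      p x y * qX x s.1 * qY y s.2 *
          Real.log (margTT p qX qY s / (margTX p qX s.1 * margTY p qY s.2))
        = p x y * qX x s.1 * qY y s.2 * Real.log (qX x s.1 / margTX p qX s.1)
          + p x y * qX x s.1 * qY y s.2 * Real.log (qY y s.2 / margTY p qY s.2)
          - p x y * qX x s.1 * qY y s.2 *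
              Real.log (qX x s.1 * qY y s.2 / margTT p qX qY s) := by
    intro x y s
    rcases eq_or_lt_of_le (hu0 x y s) with h0 | hu
    · rw [← h0]; ring
    · have hpp : 0 < p x y := by
        rcases eq_or_lt_of_le (hp0 x y) with h | h
        · exfalso; rw [← h] at hu; simp at hu
        · exact h
      have hqx : 0 < qX x s.1 := by
        rcases eq_or_lt_of_le (hqX0 x s.1) with h | h
        · exfalso; rw [← h] at hu; simp at hu
        · exact h
      have hqy : 0 < qY y s.2 := by
        rcases eq_or_lt_of_le (hqY0 y s.2) with h | h
        · exfalso; rw [← h] at hu; simp at hu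
        · exact h
      have hmx : 0 < margTX p qX s.1 :=
        lt_of_lt_of_le (mul_pos (lt_of_lt_of_le hpp (hpmX x y)) hqx) (hleTX x s.1)
      have hmy : 0 < margTY p qY s.2 :=
        lt_of_lt_of_le (mul_pos (lt_of_lt_of_le hpp (hpmY x y)) hqy) (hleTY y s.2)
      have hM : 0 < margTT p qX qY s := lt_of_lt_of_le hu (hleTT x y s)
      rw [Real.log_div hM.ne' (mul_pos hmx hmy).ne', Real.log_mul hmx.ne' hmy.ne',
        Real.log_div hqx.ne' hmx.ne', Real.log_div hqy.ne' hmy.ne',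
        Real.log_div (mul_pos hqx hqy).ne' hM.ne', Real.log_mul hqx.ne' hqy.ne']
      ring
  have hS3 : ∀ x y, Summable fun s : ℕ × ℕ =>
      p x y * qX x s.1 * qY y s.2 *
        Real.log (margTT p qX qY s / (margTX p qX s.1 * margTY p qY s.2)) :=
    fun x y => (((hS1 x y).add (hS2 x y)).sub (hSL x y)).congr
      fun s => (hptwise x y s).symm
  -- core per-(x,y) identity
  have hcore : ∀ x y,
      (∑' s : ℕ × ℕ, p x y * qX x s.1 * qY y s.2 *
          Real.log (qX x s.1 * qY y s.2 / margTT p qX qY s))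
        = (∑' s : ℕ × ℕ, p x y * qX x s.1 * qY y s.2 *
              Real.log (qX x s.1 / margTX p qX s.1))
          + (∑' s : ℕ × ℕ, p x y * qX x s.1 * qY y s.2 *
              Real.log (qY y s.2 / margTY p qY s.2))
          - ∑' s : ℕ × ℕ, p x y * qX x s.1 * qY y s.2 *
              Real.log (margTT p qX qY s /
                (margTX p qX s.1 * margTY p qY s.2)) := by
    intro x y
    calc (∑' s : ℕ × ℕ, p x y * qX x s.1 * qY y s.2 *
          Real.log (qX x s.1 * qY y s.2 / margTT p qX qY s))
        = ∑' s : ℕ × ℕ,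
            (p x y * qX x s.1 * qY y s.2 * Real.log (qX x s.1 / margTX p qX s.1)
            + p x y * qX x s.1 * qY y s.2 * Real.log (qY y s.2 / margTY p qY s.2)
            - p x y * qX x s.1 * qY y s.2 *
                Real.log (margTT p qX qY s /
                  (margTX p qX s.1 * margTY p qY s.2))) := by
          apply tsum_congr
          intro s
          have := hptwise x y s
          linarith
      _ = _ := by
          rw [Summable.tsum_sub ((hS1 x y).add (hS2 x y)) (hS3 x y),
            Summable.tsum_add (hS1 x y) (hS2 x y)]
  -- rewrite mi2
  have hB : mi2 (jointW p) (tens2 qX qY)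
      = ∑ x, ∑ y, ∑' s : ℕ × ℕ, p x y * qX x s.1 * qY y s.2 *
          Real.log (qX x s.1 * qY y s.2 / margTT p qX qY s) := by
    simp only [mi2, jointW, tens2, hpush, Fintype.sum_prod_type]
    exact Finset.sum_congr rfl fun x _ => Finset.sum_congr rfl fun y _ =>
      tsum_congr fun s => by ring
  -- rewrite miXTX
  have hC : miXTX p qX
      = ∑ x, ∑ y, ∑' s : ℕ × ℕ, p x y * qX x s.1 * qY y s.2 *
          Real.log (qX x s.1 / margTX p qX s.1) := by
    rw [miXTX]
    apply Finset.sum_congr rfl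
    intro x _
    calc (∑' t, margX p x * qX x t * Real.log (qX x t / margTX p qX t))
        = ∑' t, ∑ y, p x y * qX x t * Real.log (qX x t / margTX p qX t) := by
          apply tsum_congr
          intro t
          simp only [margX, Finset.sum_mul]
      _ = ∑ y, ∑' t, p x y * qX x t * Real.log (qX x t / margTX p qX t) :=
          Summable.tsum_finsetSum fun y _ => hSh1 x y
      _ = _ := by
          apply Finset.sum_congr rfl
          intro y _
          have h1 : Summable fun t =>
              ‖p x y * qX x t * Real.log (qX x t / margTX p qX t)‖ := by
            simpa only [Real.norm_eq_abs] using (hSh1 x y).abs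
          have h2 : Summable fun t => ‖qY y t‖ := by
            simpa only [Real.norm_eq_abs] using (hSqY y).abs
          have key := tsum_mul_tsum_of_summable_norm h1 h2
          rw [hqY1 y, mul_one] at key
          rw [key]
          exact tsum_congr fun s => by ring
  -- rewrite miYTY
  have hD : miYTY p qY
      = ∑ x, ∑ y, ∑' s : ℕ × ℕ, p x y * qX x s.1 * qY y s.2 *
          Real.log (qY y s.2 / margTY p qY s.2) := by
    rw [miYTY, Finset.sum_comm]
    apply Finset.sum_congr rfl
    intro y _
    calc (∑' t, margY p y * qY y t * Real.log (qY y t / margTY p qY t))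
        = ∑' t, ∑ x, p x y * qY y t * Real.log (qY y t / margTY p qY t) := by
          apply tsum_congr
          intro t
          simp only [margY, Finset.sum_mul]
      _ = ∑ x, ∑' t, p x y * qY y t * Real.log (qY y t / margTY p qY t) :=
          Summable.tsum_finsetSum fun x _ => hSh2 x y
      _ = _ := by
          apply Finset.sum_congr rfl
          intro x _
          have h1 : Summable fun t => ‖qX x t‖ := by
            simpa only [Real.norm_eq_abs] using (hSqX x).abs
          have h2 : Summable fun t =>
              ‖p x y * qY y t * Real.log (qY y t / margTY p qY t)‖ := by
            simpa only [Real.norm_eq_abs] using (hSh2 x y).abs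
          have key := tsum_mul_tsum_of_summable_norm h1 h2
          rw [hqX1 x, one_mul] at key
          rw [key]
          exact tsum_congr fun s => by ring
  -- rewrite miTT
  have hE : miTT p qX qY
      = ∑ x, ∑ y, ∑' s : ℕ × ℕ, p x y * qX x s.1 * qY y s.2 *
          Real.log (margTT p qX qY s /
            (margTX p qX s.1 * margTY p qY s.2)) := by
    rw [miTT]
    calc (∑' s : ℕ × ℕ, margTT p qX qY s *
          Real.log (margTT p qX qY s / (margTX p qX s.1 * margTY p qY s.2)))
        = ∑' s : ℕ × ℕ, ∑ x, ∑ y, p x y * qX x s.1 * qY y s.2 *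
            Real.log (margTT p qX qY s /
              (margTX p qX s.1 * margTY p qY s.2)) := by
          apply tsum_congr
          intro s
          simp only [margTT, Finset.sum_mul]
      _ = ∑ x, ∑' s : ℕ × ℕ, ∑ y, p x y * qX x s.1 * qY y s.2 *
            Real.log (margTT p qX qY s /
              (margTX p qX s.1 * margTY p qY s.2)) :=
          Summable.tsum_finsetSum fun x _ => summable_sum fun y _ => hS3 x y
      _ = _ := Finset.sum_congr rfl fun x _ => Summable.tsum_finsetSum fun y _ => hS3 x y
  rw [hB, hC, hD, hE]
  calc (∑ x, ∑ y, ∑' s : ℕ × ℕ, p x y * qX x s.1 * qY y s.2 *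
        Real.log (qX x s.1 * qY y s.2 / margTT p qX qY s))
      = ∑ x, ∑ y,
          ((∑' s : ℕ × ℕ, p x y * qX x s.1 * qY y s.2 *
              Real.log (qX x s.1 / margTX p qX s.1))
          + (∑' s : ℕ × ℕ, p x y * qX x s.1 * qY y s.2 *
              Real.log (qY y s.2 / margTY p qY s.2))
          - ∑' s : ℕ × ℕ, p x y * qX x s.1 * qY y s.2 *
              Real.log (margTT p qX qY s /
                (margTX p qX s.1 * margTY p qY s.2))) :=
        Finset.sum_congr rfl fun x _ => Finset.sum_congr rfl fun y _ => hcore x y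
    _ = _ := by
        simp only [Finset.sum_add_distrib, Finset.sum_sub_distrib]
end
end

section
/- Assume p(X,Y) is fully supported. The solutions to the Intertwining Information Bottleneck problem with parameter λ = I(X;Y) are exactly the channels of the form q = γ∘π, where γ ranges over congruent channels from {1,…,n} to T and π is the deterministic channel from X×Y to {1,…,n} sending each (x,y) to the index of its equivalence class under ~. -/
noncomputable section

/-- Pushforward of the distribution `w` on `A` through the channel `κ`. -/
def pushNat {A : Type} [Fintype A] (w : A → ℝ) (κ : A → ℕ → ℝ) (t : ℕ) : ℝ :=
  ∑ a, w a * κ a t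

/-- Kullback–Leibler divergence between distributions on `ℕ`. -/
def klNat (u v : ℕ → ℝ) : ℝ := ∑' t, u t * Real.log (u t / v t)

/-- Mutual information between the input (distributed as `w`) and the output of
the channel `κ`, computed from the joint distribution `w(a) κ(t|a)`. -/
def miNat {A : Type} [Fintype A] (w : A → ℝ) (κ : A → ℕ → ℝ) : ℝ :=
  ∑ a, ∑' t, w a * κ a t * Real.log (κ a t / pushNat w κ t)

/-- `κ` solves the Intertwining Information Bottleneck problem with parameter `lam`:
it is a channel satisfying the constraint `D(κ(p(X,Y)) ‖ κ(p(X)p(Y))) = lam` and it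
minimises `I_κ(X,Y;T)` among all channels satisfying this constraint. -/
def SolvesIIB {X Y : Type} [Fintype X] [Fintype Y] (p : X → Y → ℝ)
    (κ : X × Y → ℕ → ℝ) (lam : ℝ) : Prop :=
  IsChannelNat κ ∧
  klNat (pushNat (jointW p) κ) (pushNat (splitW p) κ) = lam ∧
  ∀ κ' : X × Y → ℕ → ℝ, IsChannelNat κ' →
    klNat (pushNat (jointW p) κ') (pushNat (splitW p) κ') = lam →
    miNat (jointW p) κ ≤ miNat (jointW p) κ'

/-- The ratio `p(x,y)/(p(x)p(y))` whose level sets define the equivalence relation `∼`. -/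
def ratio {X Y : Type} [Fintype X] [Fintype Y] (p : X → Y → ℝ) (a : X × Y) : ℝ :=
  p a.1 a.2 / (margX p a.1 * margY p a.2)

/-- A channel `γ` is congruent if distinct inputs have disjoint output supports. -/
def IsCongruentNat {A : Type} (γ : A → ℕ → ℝ) : Prop :=
  ∀ a a', a ≠ a' → Disjoint (Function.support (γ a)) (Function.support (γ a'))

lemma aux_log_ineq (x y : ℝ) (hx : 0 ≤ x) (hy : 0 ≤ y) (h0 : y = 0 → x = 0) :
    x - y ≤ x * Real.log (x / y) := by
  rcases eq_or_lt_of_le hx with hx0 | hx0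
  · simp [← hx0]; linarith
  · have hy0 : 0 < y := by
      rcases eq_or_lt_of_le hy with h | h
      · exact absurd (h0 h.symm) (ne_of_gt hx0)
      · exact h
    have ht : 0 < y / x := div_pos hy0 hx0
    have := Real.log_le_sub_one_of_pos ht
    have hlog : Real.log (x / y) = - Real.log (y / x) := by
      rw [← Real.log_inv]; congr 1; field_simp
    rw [hlog]
    have : x * Real.log (y / x) ≤ x * (y / x - 1) := by
      apply mul_le_mul_of_nonneg_left this hx
    have hxy : x * (y / x - 1) = y - x := by field_simp
    nlinarith

lemma aux_log_eq (x y : ℝ) (hx : 0 ≤ x) (hy : 0 ≤ y) (h0 : y = 0 → x = 0) :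
    x - y = x * Real.log (x / y) ↔ x = y := by
  constructor
  · intro h
    rcases eq_or_lt_of_le hx with hx0 | hx0
    · simp [← hx0] at h ⊢; linarith
    · have hy0 : 0 < y := by
        rcases eq_or_lt_of_le hy with h' | h'
        · exact absurd (h0 h'.symm) (ne_of_gt hx0)
        · exact h'
      by_contra hne
      have ht : 0 < y / x := div_pos hy0 hx0
      have htne : y / x ≠ 1 := by
        intro hc
        exact hne ((div_eq_one_iff_eq (ne_of_gt hx0)).mp hc).symm
      have hstrict := Real.log_lt_sub_one_of_pos ht htne
      have hlog : Real.log (x / y) = - Real.log (y / x) := by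
        rw [← Real.log_inv]; congr 1; field_simp
      rw [hlog] at h
      have : x * Real.log (y / x) < x * (y / x - 1) := by
        apply mul_lt_mul_of_pos_left hstrict hx0
      have hxy : x * (y / x - 1) = y - x := by field_simp
      nlinarith
  · intro h; subst h
    rcases eq_or_lt_of_le hx with hx0 | hx0
    · simp [← hx0]
    · rw [div_self (ne_of_gt hx0), Real.log_one]; ring

lemma gibbs {A : Type} [Fintype A] (f g : A → ℝ) (hf : ∀ a, 0 ≤ f a) (hg : ∀ a, 0 ≤ g a)
    (h0 : ∀ a, g a = 0 → f a = 0) (hsum : ∑ a, f a = ∑ a, g a) :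
    0 ≤ ∑ a, f a * Real.log (f a / g a) ∧
      ((∑ a, f a * Real.log (f a / g a)) = 0 ↔ ∀ a, f a = g a) := by
  have key : ∀ a, 0 ≤ f a * Real.log (f a / g a) - (f a - g a) := fun a =>
    sub_nonneg.mpr (aux_log_ineq (f a) (g a) (hf a) (hg a) (h0 a))
  have hsplit : ∑ a, (f a * Real.log (f a / g a) - (f a - g a)) =
      ∑ a, f a * Real.log (f a / g a) := by
    rw [Finset.sum_sub_distrib, Finset.sum_sub_distrib, hsum]; ring
  constructor
  · rw [← hsplit]
    exact Finset.sum_nonneg fun a _ => key a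
  · rw [← hsplit]
    rw [Finset.sum_eq_zero_iff_of_nonneg (fun a _ => key a)]
    constructor
    · intro h a
      have := h a (Finset.mem_univ a)
      have heq : f a - g a = f a * Real.log (f a / g a) := by linarith
      exact (aux_log_eq _ _ (hf a) (hg a) (h0 a)).mp heq
    · intro h a _
      have heq := (aux_log_eq (f a) (g a) (hf a) (hg a) (h0 a)).mpr (h a)
      linarith

lemma chan_summable {A : Type} {κ : A → ℕ → ℝ} (hκ : IsChannelNat κ) (a : A) :
    Summable (κ a) := by
  by_contra h
  have h0 := tsum_eq_zero_of_not_summable h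
  rw [hκ.2 a] at h0
  exact one_ne_zero h0

lemma chan_le_one {A : Type} {κ : A → ℕ → ℝ} (hκ : IsChannelNat κ) (a : A) (t : ℕ) :
    κ a t ≤ 1 := by
  have := Summable.le_tsum (chan_summable hκ a) t (fun j _ => hκ.1 a j)
  rwa [hκ.2 a] at this

lemma push_nonneg {A : Type} [Fintype A] {w : A → ℝ} {κ : A → ℕ → ℝ}
    (hw : ∀ a, 0 ≤ w a) (hκ : ∀ a t, 0 ≤ κ a t) (t : ℕ) : 0 ≤ pushNat w κ t :=
  Finset.sum_nonneg fun a _ => mul_nonneg (hw a) (hκ a t)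

lemma push_summable {A : Type} [Fintype A] (w : A → ℝ) {κ : A → ℕ → ℝ}
    (hκ : IsChannelNat κ) : Summable (pushNat w κ) := by
  apply summable_sum (f := fun a t => w a * κ a t)
  intro a _
  exact (chan_summable hκ a).mul_left (w a)

lemma push_tsum {A : Type} [Fintype A] (w : A → ℝ) {κ : A → ℕ → ℝ}
    (hκ : IsChannelNat κ) : ∑' t, pushNat w κ t = ∑ a, w a := by
  unfold pushNat
  rw [Summable.tsum_finsetSum (fun a _ => (chan_summable hκ a).mul_left (w a))]
  exact Finset.sum_congr rfl fun a _ => by rw [tsum_mul_left, hκ.2 a, mul_one]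

lemma push_eq_zero_iff {A : Type} [Fintype A] {w : A → ℝ} {κ : A → ℕ → ℝ}
    (hw : ∀ a, 0 < w a) (hκ : ∀ a t, 0 ≤ κ a t) (t : ℕ) :
    pushNat w κ t = 0 ↔ ∀ a, κ a t = 0 := by
  unfold pushNat
  rw [Finset.sum_eq_zero_iff_of_nonneg (fun a _ => mul_nonneg (hw a).le (hκ a t))]
  constructor
  · intro h a
    rcases mul_eq_zero.mp (h a (Finset.mem_univ a)) with h' | h'
    · exact absurd h' (ne_of_gt (hw a))
    · exact h'
  · intro h a _
    rw [h a, mul_zero]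

lemma push_pos {A : Type} [Fintype A] {w : A → ℝ} {κ : A → ℕ → ℝ}
    (hw : ∀ a, 0 < w a) (hκ : ∀ a t, 0 ≤ κ a t) {t : ℕ} {a : A} (ha : κ a t ≠ 0) :
    0 < pushNat w κ t := by
  apply Finset.sum_pos' (fun b _ => mul_nonneg (hw b).le (hκ b t))
  exact ⟨a, Finset.mem_univ a, mul_pos (hw a) (lt_of_le_of_ne (hκ a t) (Ne.symm ha))⟩

lemma fact1 {A : Type} [Fintype A] (w s : A → ℝ) (hw : ∀ a, 0 < w a) (hs : ∀ a, 0 < s a)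
    (κ : A → ℕ → ℝ) (hκ : IsChannelNat κ) :
    klNat (pushNat w κ) (pushNat s κ) ≤ ∑ a, w a * Real.log (w a / s a) ∧
    (klNat (pushNat w κ) (pushNat s κ) = ∑ a, w a * Real.log (w a / s a) ↔
      ∀ (t : ℕ) (a : A), κ a t ≠ 0 → w a * pushNat s κ t = s a * pushNat w κ t) := by
  set u := pushNat w κ with hu_def
  set v := pushNat s κ with hv_def
  set c : A → ℝ := fun a => w a * Real.log (w a / s a) with hc_def
  set C : ℝ := ∑ a, |Real.log (w a / s a)| with hC_def
  have habsC : ∀ a, |Real.log (w a / s a)| ≤ C := by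
    intro a
    rw [hC_def]
    exact Finset.single_le_sum (f := fun b => |Real.log (w b / s b)|)
      (fun b _ => abs_nonneg _) (Finset.mem_univ a)
  have hunn : ∀ t, 0 ≤ u t := push_nonneg (fun a => (hw a).le) hκ.1
  have hvnn : ∀ t, 0 ≤ v t := push_nonneg (fun a => (hs a).le) hκ.1
  have hexists : ∀ t, u t ≠ 0 → ∃ a, κ a t ≠ 0 := by
    intro t hut
    by_contra h
    push_neg at h
    exact hut ((push_eq_zero_iff hw hκ.1 t).mpr h)
  have hbound : ∀ t, u t ≠ 0 → |Real.log (u t / v t)| ≤ C := by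
    intro t hut
    obtain ⟨a0, ha0⟩ := hexists t hut
    have hupos : 0 < u t := push_pos hw hκ.1 ha0
    have hvpos : 0 < v t := push_pos hs hκ.1 ha0
    have key : ∀ a : A, w a * κ a t ≤ Real.exp C * (s a * κ a t) ∧
        Real.exp (-C) * (s a * κ a t) ≤ w a * κ a t := by
      intro a
      have hr : 0 < w a / s a := div_pos (hw a) (hs a)
      have h1 : w a / s a ≤ Real.exp C := by
        rw [← Real.exp_log hr]
        exact Real.exp_le_exp.mpr ((le_abs_self _).trans (habsC a))
      have h2 : Real.exp (-C) ≤ w a / s a := by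
        rw [← Real.exp_log hr]
        exact Real.exp_le_exp.mpr ((neg_le_neg (habsC a)).trans (neg_abs_le _))
      have hsk : (0:ℝ) ≤ s a * κ a t := mul_nonneg (hs a).le (hκ.1 a t)
      have hEq : w a * κ a t = w a / s a * (s a * κ a t) := by
        rw [div_mul_eq_mul_div, eq_div_iff (hs a).ne']
        ring
      constructor
      · rw [hEq]; exact mul_le_mul_of_nonneg_right h1 hsk
      · rw [hEq]; exact mul_le_mul_of_nonneg_right h2 hsk
    have hle : u t ≤ Real.exp C * v t := by
      rw [hu_def, hv_def]
      unfold pushNat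
      rw [Finset.mul_sum]
      exact Finset.sum_le_sum fun a _ => (key a).1
    have hge : Real.exp (-C) * v t ≤ u t := by
      rw [hu_def, hv_def]
      unfold pushNat
      rw [Finset.mul_sum]
      exact Finset.sum_le_sum fun a _ => (key a).2
    rw [abs_le]
    constructor
    · rw [Real.le_log_iff_exp_le (div_pos hupos hvpos), le_div_iff₀ hvpos]
      exact hge
    · rw [Real.log_le_iff_le_exp (div_pos hupos hvpos), div_le_iff₀ hvpos]
      exact hle
  have hH : Summable (fun t => u t * Real.log (u t / v t)) := by
    apply Summable.of_norm_bounded (g := fun t => u t * C) ((push_summable w hκ).mul_right C)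
    intro t
    by_cases hut : u t = 0
    · have hCnn : 0 ≤ C := Finset.sum_nonneg fun a _ => abs_nonneg _
      simp only [hu_def] at hut ⊢
      rw [hut]
      simp
    · rw [Real.norm_eq_abs, abs_mul, abs_of_nonneg (hunn t)]
      exact mul_le_mul_of_nonneg_left (hbound t hut) (hunn t)
  have hGsums : ∀ a ∈ Finset.univ (α := A), Summable (fun t => c a * κ a t) :=
    fun a _ => (chan_summable hκ a).mul_left (c a)
  have hG : Summable (fun t => ∑ a, c a * κ a t) := summable_sum hGsums
  set F : ℕ → ℝ := fun t => (∑ a, c a * κ a t) - u t * Real.log (u t / v t) with hF_def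
  have hFsum : Summable F := hG.sub hH
  have htsumF : ∑' t, F t = (∑ a, c a) - klNat u v := by
    rw [hF_def, Summable.tsum_sub hG hH]
    congr 1
    rw [Summable.tsum_finsetSum hGsums]
    exact Finset.sum_congr rfl fun a _ => by rw [tsum_mul_left, hκ.2 a, mul_one]
  have hper : ∀ t, 0 ≤ F t ∧ (F t = 0 ↔ ∀ a, κ a t ≠ 0 → w a * v t = s a * u t) := by
    intro t
    by_cases hut : u t = 0
    · have hz : ∀ a, κ a t = 0 := (push_eq_zero_iff hw hκ.1 t).mp hut
      have hF0 : F t = 0 := by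
        simp only [hF_def, hut]
        rw [Finset.sum_eq_zero (fun a _ => by rw [hz a, mul_zero])]
        simp
      refine ⟨le_of_eq hF0.symm, ?_⟩
      constructor
      · intro _ a ha
        exact absurd (hz a) ha
      · intro _
        exact hF0
    · obtain ⟨a0, ha0⟩ := hexists t hut
      have hupos : 0 < u t := push_pos hw hκ.1 ha0
      have hvpos : 0 < v t := push_pos hs hκ.1 ha0
      set f : A → ℝ := fun a => w a * κ a t / u t with hf_def
      set g : A → ℝ := fun a => s a * κ a t / v t with hg_def
      have hfn : ∀ a, 0 ≤ f a :=
        fun a => div_nonneg (mul_nonneg (hw a).le (hκ.1 a t)) hupos.le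
      have hgn : ∀ a, 0 ≤ g a :=
        fun a => div_nonneg (mul_nonneg (hs a).le (hκ.1 a t)) hvpos.le
      have h0 : ∀ a, g a = 0 → f a = 0 := by
        intro a hga
        have hsk : s a * κ a t = 0 := by
          have := div_eq_zero_iff.mp hga
          rcases this with h' | h'
          · exact h'
          · exact absurd h' hvpos.ne'
        have hκ0 : κ a t = 0 := by
          rcases mul_eq_zero.mp hsk with h' | h'
          · exact absurd h' (hs a).ne'
          · exact h'
        show w a * κ a t / u t = 0
        rw [hκ0, mul_zero, zero_div]
      have hsum : ∑ a, f a = ∑ a, g a := by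
        show ∑ a, w a * κ a t / u t = ∑ a, s a * κ a t / v t
        rw [← Finset.sum_div, ← Finset.sum_div]
        rw [show ∑ a, w a * κ a t = u t from rfl, show ∑ a, s a * κ a t = v t from rfl,
            div_self hupos.ne', div_self hvpos.ne']
      obtain ⟨hS0, hSeq⟩ := gibbs f g hfn hgn h0 hsum
      have hFt : F t = u t * ∑ a, f a * Real.log (f a / g a) := by
        have hterm : ∀ a : A, u t * (f a * Real.log (f a / g a)) =
            c a * κ a t - w a * κ a t * Real.log (u t / v t) := by
          intro a
          by_cases hk : κ a t = 0
          · show u t * (w a * κ a t / u t * Real.log _) = _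
            rw [hk]
            simp [hc_def]
          · have hkpos : 0 < κ a t := lt_of_le_of_ne (hκ.1 a t) (Ne.symm hk)
            have hfg : f a / g a = w a / s a * (v t / u t) := by
              show w a * κ a t / u t / (s a * κ a t / v t) = _
              field_simp [hkpos.ne', (hs a).ne', hupos.ne', hvpos.ne']
            rw [hfg, Real.log_mul (ne_of_gt (div_pos (hw a) (hs a)))
                (ne_of_gt (div_pos hvpos hupos)),
              show v t / u t = (u t / v t)⁻¹ by rw [inv_div], Real.log_inv]
            show u t * (w a * κ a t / u t * _) = _
            rw [hc_def]
            field_simp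
            ring
        have h1 : u t * ∑ a, f a * Real.log (f a / g a)
            = ∑ a, (c a * κ a t - w a * κ a t * Real.log (u t / v t)) := by
          rw [Finset.mul_sum]
          exact Finset.sum_congr rfl fun a _ => hterm a
        rw [h1, Finset.sum_sub_distrib, ← Finset.sum_mul,
          show ∑ a, w a * κ a t = u t from rfl]
      constructor
      · rw [hFt]
        exact mul_nonneg hupos.le hS0
      · rw [hFt]
        constructor
        · intro h
          have hS : ∑ a, f a * Real.log (f a / g a) = 0 := by
            rcases mul_eq_zero.mp h with h' | h'
            · exact absurd h' hupos.ne'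
            · exact h'
          intro a ha
          have hfg : w a * κ a t / u t = s a * κ a t / v t := hSeq.mp hS a
          have hcross := (div_eq_div_iff hupos.ne' hvpos.ne').mp hfg
          have : κ a t * (w a * v t) = κ a t * (s a * u t) := by ring_nf; ring_nf at hcross; linarith
          exact mul_left_cancel₀ ha this
        · intro h
          have hS : ∑ a, f a * Real.log (f a / g a) = 0 := by
            apply hSeq.mpr
            intro a
            by_cases hk : κ a t = 0
            · show w a * κ a t / u t = s a * κ a t / v t
              rw [hk]; simp
            · show w a * κ a t / u t = s a * κ a t / v t
              rw [div_eq_div_iff hupos.ne' hvpos.ne']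
              have := h a hk
              linear_combination κ a t * this
          rw [hS, mul_zero]
  have hnnF : ∀ t, 0 ≤ F t := fun t => (hper t).1
  have hmain : klNat u v = (∑ a, c a) - ∑' t, F t := by
    rw [htsumF]; ring
  constructor
  · rw [hmain]
    have := tsum_nonneg (L := SummationFilter.unconditional ℕ) hnnF
    have hcc : ∑ a, c a = ∑ a, w a * Real.log (w a / s a) := rfl
    linarith [hcc ▸ (le_refl (∑ a, c a))]
  · rw [hmain]
    constructor
    · intro h
      have hzero : ∑' t, F t = 0 := by
        have hcc : (∑ a, c a) = ∑ a, w a * Real.log (w a / s a) := rfl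
        linarith [h, hcc]
      intro t a ha
      have hle : F t ≤ 0 := hzero ▸ Summable.le_tsum hFsum t (fun j _ => hnnF j)
      have hFt0 : F t = 0 := le_antisymm hle (hnnF t)
      exact ((hper t).2.mp hFt0) a ha
    · intro h
      have hz : ∀ t, F t = 0 := fun t => (hper t).2.mpr (fun a ha => h t a ha)
      have : ∑' t, F t = 0 := by
        calc ∑' t, F t = ∑' _ : ℕ, (0:ℝ) := tsum_congr hz
        _ = 0 := tsum_zero
      rw [this]
      ring

lemma fact2 {A : Type} [Fintype A] (w : A → ℝ) (hw : ∀ a, 0 < w a)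
    {n : ℕ} (idx : A → Fin n) (κ : A → ℕ → ℝ) (hκ : IsChannelNat κ)
    (hclass : ∀ (t : ℕ) (a a' : A), κ a t ≠ 0 → κ a' t ≠ 0 → idx a = idx a') :
    -(∑ a, w a * Real.log (∑ b, if idx b = idx a then w b else 0)) ≤ miNat w κ ∧
    (miNat w κ = -(∑ a, w a * Real.log (∑ b, if idx b = idx a then w b else 0)) ↔
      ∀ (t : ℕ) (a a' : A), idx a = idx a' → κ a t = κ a' t) := by
  classical
  set u := pushNat w κ with hu_def
  set W : Fin n → ℝ := fun j => ∑ b, if idx b = j then w b else 0 with hW_def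
  have hWnn : ∀ j, 0 ≤ W j := by
    intro j
    rw [hW_def]
    exact Finset.sum_nonneg fun b _ => by split <;> [exact (hw b).le; rfl]
  have hWpos : ∀ a : A, 0 < W (idx a) := by
    intro a
    rw [hW_def]
    apply Finset.sum_pos' (fun b _ => by split <;> [exact (hw b).le; rfl])
    exact ⟨a, Finset.mem_univ a, by simp [hw a]⟩
  have hunn : ∀ t, 0 ≤ u t := push_nonneg (fun a => (hw a).le) hκ.1
  have hzero : ∀ t, u t = 0 → ∀ a, κ a t = 0 := fun t h => (push_eq_zero_iff hw hκ.1 t).mp h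
  -- summability of the joint-information terms
  have hbound_at : ∀ (a : A) (t : ℕ),
      ‖w a * κ a t * Real.log (κ a t / u t)‖ ≤ w a * (|Real.log (w a)| * κ a t + u t) := by
    intro a t
    by_cases hk : κ a t = 0
    · rw [hk]
      simp only [mul_zero, zero_mul, zero_div, mul_zero, zero_add]
      rw [norm_zero]
      exact mul_nonneg (hw a).le (hunn t)
    · have hkpos : 0 < κ a t := lt_of_le_of_ne (hκ.1 a t) (Ne.symm hk)
      have hupos : 0 < u t := push_pos hw hκ.1 hk
      have huk : w a * κ a t ≤ u t :=
        Finset.single_le_sum (f := fun b => w b * κ b t)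
          (fun b _ => mul_nonneg (hw b).le (hκ.1 b t)) (Finset.mem_univ a)
      have hup : Real.log (κ a t / u t) ≤ |Real.log (w a)| := by
        have hdle : κ a t / u t ≤ 1 / w a := by
          rw [div_le_div_iff₀ hupos (hw a)]
          calc κ a t * w a = w a * κ a t := by ring
            _ ≤ u t := huk
            _ = 1 * u t := by ring
        calc Real.log (κ a t / u t) ≤ Real.log (1 / w a) :=
              Real.log_le_log (div_pos hkpos hupos) hdle
          _ = -Real.log (w a) := by rw [one_div, Real.log_inv]
          _ ≤ |Real.log (w a)| := neg_le_abs _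
      have hlow : κ a t - u t ≤ κ a t * Real.log (κ a t / u t) :=
        aux_log_ineq (κ a t) (u t) (hκ.1 a t) (hunn t) (fun h => hzero t h a)
      have habs : |κ a t * Real.log (κ a t / u t)| ≤ |Real.log (w a)| * κ a t + u t := by
        rw [abs_le]
        constructor
        · have h1 : -(|Real.log (w a)| * κ a t + u t) ≤ -u t := by
            have : 0 ≤ |Real.log (w a)| * κ a t := mul_nonneg (abs_nonneg _) (hκ.1 a t)
            linarith
          have h2 : -u t ≤ κ a t * Real.log (κ a t / u t) := by
            have := hκ.1 a t
            linarith
          linarith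
        · have := mul_le_mul_of_nonneg_left hup (hκ.1 a t)
          calc κ a t * Real.log (κ a t / u t) ≤ κ a t * |Real.log (w a)| := this
            _ = |Real.log (w a)| * κ a t := by ring
            _ ≤ |Real.log (w a)| * κ a t + u t := by linarith [hunn t]
      calc ‖w a * κ a t * Real.log (κ a t / u t)‖
          = w a * |κ a t * Real.log (κ a t / u t)| := by
            rw [Real.norm_eq_abs, mul_assoc, abs_mul, abs_of_nonneg (hw a).le]
        _ ≤ w a * (|Real.log (w a)| * κ a t + u t) :=
            mul_le_mul_of_nonneg_left habs (hw a).le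
  have hbsum : ∀ a : A, Summable (fun t => w a * (|Real.log (w a)| * κ a t + u t)) := by
    intro a
    exact (((chan_summable hκ a).mul_left _).add (push_summable w hκ)).mul_left _
  have hsummand : ∀ a : A, Summable (fun t => w a * κ a t * Real.log (κ a t / u t)) := by
    intro a
    exact Summable.of_norm_bounded (hbsum a) (hbound_at a)
  have hm1 : Summable (fun t => ∑ a, w a * κ a t * Real.log (κ a t / u t)) := by
    apply Summable.of_norm_bounded
      (g := fun t => ∑ a, w a * (|Real.log (w a)| * κ a t + u t))
      (summable_sum (fun a _ => hbsum a))
    intro t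
    calc ‖∑ a, w a * κ a t * Real.log (κ a t / u t)‖
        ≤ ∑ a, ‖w a * κ a t * Real.log (κ a t / u t)‖ := norm_sum_le _ _
      _ ≤ _ := Finset.sum_le_sum fun a _ => hbound_at a t
  have hm2sums : ∀ a ∈ Finset.univ (α := A),
      Summable (fun t => (w a * Real.log (W (idx a))) * κ a t) :=
    fun a _ => (chan_summable hκ a).mul_left _
  have hm2 : Summable (fun t => ∑ a, (w a * Real.log (W (idx a))) * κ a t) :=
    summable_sum hm2sums
  set M : ℕ → ℝ := fun t => (∑ a, w a * κ a t * Real.log (κ a t / u t)) +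
      ∑ a, (w a * Real.log (W (idx a))) * κ a t with hM_def
  have hMsum : Summable M := hm1.add hm2
  have hE : ∑' t, M t = miNat w κ + ∑ a, w a * Real.log (W (idx a)) := by
    rw [hM_def, Summable.tsum_add hm1 hm2]
    congr 1
    · rw [Summable.tsum_finsetSum (fun a _ => hsummand a)]
      rfl
    · rw [Summable.tsum_finsetSum hm2sums]
      exact Finset.sum_congr rfl fun a _ => by rw [tsum_mul_left, hκ.2 a, mul_one]
  have hper : ∀ t, 0 ≤ M t ∧
      (M t = 0 ↔ ∀ a a' : A, idx a = idx a' → κ a t = κ a' t) := by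
    intro t
    by_cases hut : u t = 0
    · have hz := hzero t hut
      have hM0 : M t = 0 := by
        show (∑ a, w a * κ a t * Real.log (κ a t / u t)) +
            ∑ a, (w a * Real.log (W (idx a))) * κ a t = 0
        rw [Finset.sum_eq_zero (fun a _ => by rw [hz a]; simp),
            Finset.sum_eq_zero (fun a _ => by rw [hz a]; ring)]
        ring
      exact ⟨le_of_eq hM0.symm, by
        rw [hM0]
        exact ⟨fun _ a a' _ => by rw [hz a, hz a'], fun _ => rfl⟩⟩
    · obtain ⟨a0, ha0⟩ : ∃ a, κ a t ≠ 0 := by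
        by_contra h
        push_neg at h
        exact hut ((push_eq_zero_iff hw hκ.1 t).mpr h)
      have hupos : 0 < u t := push_pos hw hκ.1 ha0
      have hk0pos : 0 < κ a0 t := lt_of_le_of_ne (hκ.1 a0 t) (Ne.symm ha0)
      have hnotclass : ∀ a : A, idx a ≠ idx a0 → κ a t = 0 := by
        intro a ha
        by_contra hk
        exact ha (hclass t a a0 hk ha0)
      set f : A → ℝ := fun a => w a * κ a t / u t with hf_def
      set g : A → ℝ := fun a => if idx a = idx a0 then w a / W (idx a0) else 0 with hg_def
      have hfn : ∀ a, 0 ≤ f a :=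
        fun a => div_nonneg (mul_nonneg (hw a).le (hκ.1 a t)) hupos.le
      have hgn : ∀ a, 0 ≤ g a := by
        intro a
        rw [hg_def]
        dsimp only
        split
        · exact div_nonneg (hw a).le (hWnn _)
        · rfl
      have h0 : ∀ a, g a = 0 → f a = 0 := by
        intro a hga
        have hja : idx a ≠ idx a0 := by
          intro hj
          rw [hg_def] at hga
          dsimp only at hga
          rw [if_pos hj] at hga
          exact (div_pos (hw a) (hWpos a0)).ne' hga
        show w a * κ a t / u t = 0
        rw [hnotclass a hja, mul_zero, zero_div]
      have hsum : ∑ a, f a = ∑ a, g a := by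
        have h1 : ∑ a, f a = 1 := by
          show ∑ a, w a * κ a t / u t = 1
          rw [← Finset.sum_div, show ∑ a, w a * κ a t = u t from rfl,
              div_self hupos.ne']
        have h2 : ∑ a, g a = 1 := by
          show ∑ a, (if idx a = idx a0 then w a / W (idx a0) else 0) = 1
          have : ∀ a : A, (if idx a = idx a0 then w a / W (idx a0) else 0) =
              (if idx a = idx a0 then w a else 0) / W (idx a0) := by
            intro a
            by_cases hc : idx a = idx a0
            · rw [if_pos hc, if_pos hc]
            · rw [if_neg hc, if_neg hc, zero_div]
          rw [Finset.sum_congr rfl (fun a _ => this a), ← Finset.sum_div,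
              show ∑ a, (if idx a = idx a0 then w a else 0) = W (idx a0) from rfl,
              div_self (hWpos a0).ne']
        rw [h1, h2]
      obtain ⟨hS0, hSeq⟩ := gibbs f g hfn hgn h0 hsum
      have hterm : ∀ a : A, u t * (f a * Real.log (f a / g a)) =
          w a * κ a t * Real.log (κ a t / u t) + (w a * Real.log (W (idx a))) * κ a t := by
        intro a
        by_cases hk : κ a t = 0
        · show u t * (w a * κ a t / u t * Real.log _) = _
          rw [hk]
          simp
        · have hkpos : 0 < κ a t := lt_of_le_of_ne (hκ.1 a t) (Ne.symm hk)
          have hja : idx a = idx a0 := hclass t a a0 hk ha0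
          have hga : g a = w a / W (idx a) := by
            rw [hg_def]
            dsimp only
            rw [if_pos hja, hja]
          have hfg : f a / g a = κ a t / u t * W (idx a) := by
            rw [hga]
            show w a * κ a t / u t / (w a / W (idx a)) = _
            field_simp [hupos.ne', (hWpos a).ne', (hw a).ne']
          rw [hfg, Real.log_mul (div_pos hkpos hupos).ne' (hWpos a).ne']
          show u t * (w a * κ a t / u t * _) = _
          field_simp [hupos.ne']
      have hMt : M t = u t * ∑ a, f a * Real.log (f a / g a) := by
        have h1 : u t * ∑ a, f a * Real.log (f a / g a) =
            ∑ a, (w a * κ a t * Real.log (κ a t / u t) +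
              (w a * Real.log (W (idx a))) * κ a t) := by
          rw [Finset.mul_sum]
          exact Finset.sum_congr rfl fun a _ => hterm a
        rw [h1, Finset.sum_add_distrib]
      constructor
      · rw [hMt]
        exact mul_nonneg hupos.le hS0
      · rw [hMt]
        constructor
        · intro h a a' hj
          have hS : ∀ b, f b = g b := by
            apply hSeq.mp
            rcases mul_eq_zero.mp h with h' | h'
            · exact absurd h' hupos.ne'
            · exact h'
          by_cases hj0 : idx a = idx a0
          · have hj0' : idx a' = idx a0 := hj ▸ hj0
            have key : ∀ b : A, idx b = idx a0 → κ b t * W (idx a0) = u t := by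
              intro b hjb
              have hfb := hS b
              rw [hg_def] at hfb
              dsimp only at hfb
              rw [if_pos hjb] at hfb
              have : w b * κ b t / u t = w b / W (idx a0) := hfb
              rw [div_eq_div_iff hupos.ne' (hWpos a0).ne'] at this
              have h2 : w b * (κ b t * W (idx a0)) = w b * u t := by
                linear_combination this
              exact mul_left_cancel₀ (hw b).ne' h2
            have k1 := key a hj0
            have k2 := key a' hj0'
            have := (hWpos a0).ne'
            have : κ a t * W (idx a0) = κ a' t * W (idx a0) := by rw [k1, k2]
            exact mul_right_cancel₀ (hWpos a0).ne' this
          · have hja' : idx a' ≠ idx a0 := fun hc => hj0 (hj.trans hc)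
            rw [hnotclass a hj0, hnotclass a' hja']
        · intro hQ
          have hS : ∑ a, f a * Real.log (f a / g a) = 0 := by
            apply hSeq.mpr
            intro a
            by_cases hj0 : idx a = idx a0
            · have hka : κ a t = κ a0 t := hQ a a0 hj0
              have huW : u t = W (idx a0) * κ a0 t := by
                show ∑ b, w b * κ b t = _
                rw [hW_def]
                dsimp only
                rw [Finset.sum_mul]
                apply Finset.sum_congr rfl
                intro b _
                by_cases hjb : idx b = idx a0
                · rw [if_pos hjb, hQ b a0 hjb]
                · rw [if_neg hjb, hnotclass b hjb, mul_zero, zero_mul]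
              show w a * κ a t / u t = g a
              rw [hg_def]
              dsimp only
              rw [if_pos hj0, huW, hka]
              field_simp [hk0pos.ne', (hWpos a0).ne']
            · show w a * κ a t / u t = g a
              rw [hg_def]
              dsimp only
              rw [if_neg hj0, hnotclass a hj0, mul_zero, zero_div]
          rw [hS, mul_zero]
  have hnnM : ∀ t, 0 ≤ M t := fun t => (hper t).1
  have hmi : miNat w κ = ∑' t, M t - ∑ a, w a * Real.log (W (idx a)) := by
    rw [hE]; ring
  have hWd : (∑ a, w a * Real.log (W (idx a))) =
      ∑ a, w a * Real.log (∑ b, if idx b = idx a then w b else 0) := rfl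
  constructor
  · rw [hmi, ← hWd]
    have := tsum_nonneg (L := SummationFilter.unconditional ℕ) hnnM
    linarith
  · rw [hmi, ← hWd]
    constructor
    · intro h
      have hz : ∑' t, M t = 0 := by linarith
      intro t a a' hj
      have hle : M t ≤ 0 := hz ▸ Summable.le_tsum hMsum t (fun j _ => hnnM j)
      exact ((hper t).2.mp (le_antisymm hle (hnnM t))) a a' hj
    · intro h
      have hz : ∀ t, M t = 0 := fun t => (hper t).2.mpr (fun a a' hj => h t a a' hj)
      have : ∑' t, M t = 0 := by
        calc ∑' t, M t = ∑' _ : ℕ, (0:ℝ) := tsum_congr hz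
        _ = 0 := tsum_zero
      rw [this]
      ring

lemma fact3_star {A : Type} [Fintype A] (w s : A → ℝ) {n : ℕ} (idx : A → Fin n)
    (γ : Fin n → ℕ → ℝ) (hcong : IsCongruentNat γ)
    (hcross : ∀ a a' : A, idx a = idx a' → w a * s a' = s a * w a')
    (κ : A → ℕ → ℝ) (hq : ∀ a t, κ a t = γ (idx a) t) :
    ∀ (t : ℕ) (a : A), κ a t ≠ 0 → w a * pushNat s κ t = s a * pushNat w κ t := by
  intro t a ha
  unfold pushNat
  rw [Finset.mul_sum, Finset.mul_sum]
  apply Finset.sum_congr rfl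
  intro b _
  by_cases hb : κ b t = 0
  · rw [hb]; ring
  · have hjb : idx b = idx a := by
      by_contra hne
      have hd := hcong (idx b) (idx a) hne
      rw [Set.disjoint_left] at hd
      have hbmem : t ∈ Function.support (γ (idx b)) := by
        rw [Function.mem_support]; rw [hq b t] at hb; exact hb
      have hamem : t ∈ Function.support (γ (idx a)) := by
        rw [Function.mem_support]; rw [hq a t] at ha; exact ha
      exact hd hbmem hamem
    have h := hcross a b hjb.symm
    linear_combination κ b t * h

/-- Assume `p(X,Y)` is fully supported. Let `∼` be the relation
`(x,y) ∼ (x',y') ↔ p(x,y)/(p(x)p(y)) = p(x',y')/(p(x')p(y'))`, with equivalence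
classes indexed by `idx : X × Y → Fin n` (so `π = idx` is the deterministic channel
sending each `(x,y)` to its class index, and `S_j = idx⁻¹ j`). Then the solutions of
the Intertwining Information Bottleneck problem with parameter `λ = I(X;Y)` are
exactly the channels of the form `γ ∘ π` with `γ` a congruent channel from
`{1,…,n}` to `T`. -/
theorem iib_solutions_full_support {X Y : Type} [Fintype X] [Fintype Y]
    (p : X → Y → ℝ) (hp : IsJointDist p)
    (hfull : ∀ x y, p x y ≠ 0)
    (n : ℕ) (idx : X × Y → Fin n)
    (hsurj : Function.Surjective idx)
    (hidx : ∀ a b : X × Y, idx a = idx b ↔ ratio p a = ratio p b) :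
    ∀ q : X × Y → ℕ → ℝ,
      SolvesIIB p q (miXY p) ↔
        (IsChannelNat q ∧
          ∃ γ : Fin n → ℕ → ℝ,
            (∀ j t, 0 ≤ γ j t) ∧ (∀ j, (∑' t, γ j t) = 1) ∧ IsCongruentNat γ ∧
            ∀ (a : X × Y) (t : ℕ), q a t = γ (idx a) t) := by
  classical
  set w : X × Y → ℝ := jointW p with hw_def
  set s : X × Y → ℝ := splitW p with hs_def
  have hwpos : ∀ a : X × Y, 0 < w a :=
    fun a => lt_of_le_of_ne (hp.1 a.1 a.2) (Ne.symm (hfull a.1 a.2))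
  have h1 : (∑ x, ∑ y, p x y) = 1 := hp.2
  have hX : Nonempty X := by
    by_contra h
    rw [not_nonempty_iff] at h
    rw [@Finset.univ_eq_empty X _ h, Finset.sum_empty] at h1
    exact one_ne_zero h1.symm
  have hY : Nonempty Y := by
    by_contra h
    rw [not_nonempty_iff] at h
    rw [Finset.sum_congr rfl
      (fun x _ => by rw [@Finset.univ_eq_empty Y _ h, Finset.sum_empty])] at h1
    rw [Finset.sum_const, smul_zero] at h1
    exact one_ne_zero h1.symm
  have hspos : ∀ a : X × Y, 0 < s a := by
    intro a
    have hmx : 0 < margX p a.1 :=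
      Finset.sum_pos (fun y _ => lt_of_le_of_ne (hp.1 a.1 y) (Ne.symm (hfull a.1 y)))
        Finset.univ_nonempty
    have hmy : 0 < margY p a.2 :=
      Finset.sum_pos (fun x _ => lt_of_le_of_ne (hp.1 x a.2) (Ne.symm (hfull x a.2)))
        Finset.univ_nonempty
    exact mul_pos hmx hmy
  have hmi : miXY p = ∑ a : X × Y, w a * Real.log (w a / s a) := by
    rw [hw_def, hs_def]
    unfold miXY jointW splitW
    exact (Fintype.sum_prod_type (fun a : X × Y =>
      p a.1 a.2 * Real.log (p a.1 a.2 / (margX p a.1 * margY p a.2)))).symm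
  have hratio : ∀ a : X × Y, ratio p a = w a / s a := fun a => rfl
  have hcross : ∀ a a' : X × Y, idx a = idx a' → w a * s a' = s a * w a' := by
    intro a a' h
    have hr := (hidx a a').mp h
    rw [hratio, hratio] at hr
    rw [div_eq_div_iff (hspos a).ne' (hspos a').ne'] at hr
    linear_combination hr
  have hclass_of_star : ∀ κ : X × Y → ℕ → ℝ, (∀ a t, 0 ≤ κ a t) →
      (∀ (t : ℕ) (a : X × Y), κ a t ≠ 0 →
        w a * pushNat s κ t = s a * pushNat w κ t) →
      ∀ (t : ℕ) (a a' : X × Y), κ a t ≠ 0 → κ a' t ≠ 0 → idx a = idx a' := by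
    intro κ hκnn hstar t a a' ha ha'
    have hv : 0 < pushNat s κ t := push_pos hspos hκnn ha
    have h1' := hstar t a ha
    have h2' := hstar t a' ha'
    apply (hidx a a').mpr
    rw [hratio, hratio]
    rw [div_eq_div_iff (hspos a).ne' (hspos a').ne']
    have key : (w a * s a') * pushNat s κ t = (w a' * s a) * pushNat s κ t := by
      calc (w a * s a') * pushNat s κ t = (w a * pushNat s κ t) * s a' := by ring
        _ = (s a * pushNat w κ t) * s a' := by rw [h1']
        _ = (s a' * pushNat w κ t) * s a := by ring
        _ = (w a' * pushNat s κ t) * s a := by rw [h2']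
        _ = (w a' * s a) * pushNat s κ t := by ring
    exact mul_right_cancel₀ hv.ne' key
  have hsolve : ∀ q : X × Y → ℕ → ℝ, IsChannelNat q →
      (∀ j t, 0 ≤ (fun j t => q (Function.surjInv hsurj j) t) j t) → True := fun _ _ _ => trivial
  -- the achieved optimum value
  set Hpi : ℝ :=
    -(∑ a : X × Y, w a * Real.log (∑ b : X × Y, if idx b = idx a then w b else 0))
    with hHpi_def
  have hfactored : ∀ q : X × Y → ℕ → ℝ, IsChannelNat q →
      (∃ γ : Fin n → ℕ → ℝ,
        (∀ j t, 0 ≤ γ j t) ∧ (∀ j, (∑' t, γ j t) = 1) ∧ IsCongruentNat γ ∧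
        ∀ (a : X × Y) (t : ℕ), q a t = γ (idx a) t) →
      klNat (pushNat w q) (pushNat s q) = miXY p ∧ miNat w q = Hpi := by
    rintro q hq ⟨γ, hγnn, hγ1, hγcong, hγfac⟩
    have hstar := fact3_star w s idx γ hγcong hcross q (fun a t => hγfac a t)
    have hdag : ∀ (t : ℕ) (a a' : X × Y), idx a = idx a' → q a t = q a' t := by
      intro t a a' h
      rw [hγfac a t, hγfac a' t, h]
    constructor
    · rw [hmi]
      exact (fact1 w s hwpos hspos q hq).2.mpr hstar
    · exact (fact2 w hwpos idx q hq
        (hclass_of_star q hq.1 hstar)).2.mpr hdag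
  have hlower : ∀ κ' : X × Y → ℕ → ℝ, IsChannelNat κ' →
      klNat (pushNat w κ') (pushNat s κ') = miXY p → Hpi ≤ miNat w κ' := by
    intro κ' hκ' hcons
    have hstar := (fact1 w s hwpos hspos κ' hκ').2.mp (by rw [← hmi]; exact hcons)
    exact (fact2 w hwpos idx κ' hκ' (hclass_of_star κ' hκ'.1 hstar)).1
  -- the reference channel
  set γ0 : Fin n → ℕ → ℝ := fun j t => if t = (j : ℕ) then 1 else 0 with hγ0_def
  have hγ0nn : ∀ j t, 0 ≤ γ0 j t := by
    intro j t
    rw [hγ0_def]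
    dsimp only
    split <;> norm_num
  have hγ0sum : ∀ j, (∑' t, γ0 j t) = 1 := fun j => tsum_ite_eq (j : ℕ) (fun _ => (1 : ℝ))
  have hγ0cong : IsCongruentNat γ0 := by
    intro j j' hne
    rw [Set.disjoint_left]
    intro t ht ht'
    rw [Function.mem_support] at ht ht'
    have hj : t = (j : ℕ) := by
      by_contra hc
      exact ht (if_neg hc)
    have hj' : t = (j' : ℕ) := by
      by_contra hc
      exact ht' (if_neg hc)
    exact hne (Fin.val_injective (hj.symm.trans hj'))
  set κ0 : X × Y → ℕ → ℝ := fun a t => γ0 (idx a) t with hκ0_def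
  have hκ0 : IsChannelNat κ0 := ⟨fun a t => hγ0nn (idx a) t, fun a => hγ0sum (idx a)⟩
  have hκ0fac := hfactored κ0 hκ0 ⟨γ0, hγ0nn, hγ0sum, hγ0cong, fun a t => rfl⟩
  intro q
  constructor
  · rintro ⟨hq, hcons, hminim⟩
    refine ⟨hq, ?_⟩
    have hstar := (fact1 w s hwpos hspos q hq).2.mp (by rw [← hmi]; exact hcons)
    have hclassq := hclass_of_star q hq.1 hstar
    have hle : miNat w q ≤ Hpi := by
      have := hminim κ0 hκ0 hκ0fac.1
      rw [hκ0fac.2] at this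
      exact this
    have hge : Hpi ≤ miNat w q := (fact2 w hwpos idx q hq hclassq).1
    have heq : miNat w q = Hpi := le_antisymm hle hge
    have hdag := (fact2 w hwpos idx q hq hclassq).2.mp heq
    refine ⟨fun j t => q (Function.surjInv hsurj j) t, fun j t => hq.1 _ t,
      fun j => hq.2 _, ?_, ?_⟩
    · intro j j' hne
      rw [Set.disjoint_left]
      intro t ht ht'
      rw [Function.mem_support] at ht ht'
      have hidxeq : idx (Function.surjInv hsurj j) = idx (Function.surjInv hsurj j') :=
        hclassq t _ _ ht ht'
      rw [Function.surjInv_eq hsurj j, Function.surjInv_eq hsurj j'] at hidxeq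
      exact hne hidxeq
    · intro a t
      exact hdag t a (Function.surjInv hsurj (idx a))
        (Function.surjInv_eq hsurj (idx a)).symm
  · rintro ⟨hq, γ, hγnn, hγ1, hγcong, hγfac⟩
    have hf := hfactored q hq ⟨γ, hγnn, hγ1, hγcong, hγfac⟩
    refine ⟨hq, hf.1, ?_⟩
    intro κ' hκ' hcons'
    rw [hf.2]
    exact hlower κ' hκ' hcons'
end
end

section
/- Let q(T|X,Y) be a channel from X×Y to T satisfying D(q(T) || q̃(T)) = I(X;Y), and define the channel q'(T|X,Y) by q'(t|x,y) := q(t|T_j^q) q(T_j^q|x,y) for (x,y) ∈ S (where j is the unique index with t ∈ T_j^q, and q(t|T_j^q) := q(t)/q(T_j^q)) and q'(t|x,y) := q(t|x,y) for (x,y) ∈ S^c. Then: (i) for (x,y) ∈ S, q(T_j^q|x,y) = δ_{(x,y) ∈ S_j}; (ii) q'(T) = q(T); (iii) T_j^q = T_j^{q'} for all j; (iv) I_q(X,Y;T) ≥ I_{q'}(X,Y;T), with equality if and only if q(T|X,Y) = q'(T|X,Y). -/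
noncomputable section

/-- `T_j^q`: the "probabilistic image" of the class `S_j` through the channel `q`,
i.e. the set of `t` achieved with positive probability from some `(x,y) ∈ S_j`. -/
def TjSet {X Y : Type} {n : ℕ} (p : X → Y → ℝ)
    (idx : X × Y → Fin n) (q : X × Y → ℕ → ℝ) (j : Fin n) : Set ℕ :=
  {t | ∃ a : X × Y, jointW p a ≠ 0 ∧ idx a = j ∧ 0 < q a t}

/-- `q(T_j^q)`: the mass of `T_j^q` under the pushforward `q(T)`. -/
def TjMass {X Y : Type} [Fintype X] [Fintype Y] {n : ℕ} (p : X → Y → ℝ)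
    (idx : X × Y → Fin n) (q : X × Y → ℕ → ℝ) (j : Fin n) : ℝ :=
  ∑' t, Set.indicator (TjSet p idx q j) (pushNat (jointW p) q) t

/-- The channel `γ_q` from `{1,…,n}` to `T`, `γ_q(t|j) = (q(t)/q(T_j^q)) δ_{t ∈ T_j^q}`. -/
def gammaq {X Y : Type} [Fintype X] [Fintype Y] {n : ℕ} (p : X → Y → ℝ)
    (idx : X × Y → Fin n) (q : X × Y → ℕ → ℝ) (j : Fin n) (t : ℕ) : ℝ :=
  Set.indicator (TjSet p idx q j)
    (fun t' => pushNat (jointW p) q t' / TjMass p idx q j) t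

/-- `q(T_j^q | x,y)`: the conditional mass of `T_j^q` given the input `(x,y)`. -/
def condMassTj {X Y : Type} {n : ℕ} (p : X → Y → ℝ)
    (idx : X × Y → Fin n) (q : X × Y → ℕ → ℝ) (a : X × Y) (j : Fin n) : ℝ :=
  ∑' t, Set.indicator (TjSet p idx q j) (q a) t

open Classical in
/-- The modified channel `q'`: on the support `S`,
`q'(t|x,y) = q(t|T_j^q) q(T_j^q|x,y)` where `j` is the (unique) index with
`t ∈ T_j^q` (expressed as `∑ j, γ_q(t|j) q(T_j^q|x,y)`), and `q' = q` on `Sᶜ`. -/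
def qprime {X Y : Type} [Fintype X] [Fintype Y] {n : ℕ} (p : X → Y → ℝ)
    (idx : X × Y → Fin n) (q : X × Y → ℕ → ℝ) : X × Y → ℕ → ℝ := fun a t =>
  if jointW p a ≠ 0 then ∑ j, gammaq p idx q j t * condMassTj p idx q a j
  else q a t



lemma gibbs_pt {u w : ℝ} (hu : 0 ≤ u) (hw : 0 ≤ w) (h : u ≠ 0 → w ≠ 0) :
    u - w ≤ u * Real.log (u / w) := by
  rcases eq_or_lt_of_le hu with h0 | hu'
  · simp [← h0, hw]
  · have hw' : 0 < w := lt_of_le_of_ne hw (Ne.symm (h (ne_of_gt hu')))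
    have hl : Real.log (w / u) ≤ w / u - 1 := Real.log_le_sub_one_of_pos (by positivity)
    have : Real.log (u / w) = -Real.log (w / u) := by
      rw [← Real.log_inv]; congr 1; field_simp
    rw [this]
    nlinarith [mul_le_mul_of_nonneg_left hl (le_of_lt hu'), mul_div_cancel₀ w (ne_of_gt hu')]

lemma gibbs_pt_eq {u w : ℝ} (hu : 0 ≤ u) (hw : 0 ≤ w) (h : u ≠ 0 → w ≠ 0)
    (heq : u * Real.log (u / w) = u - w) : u = w := by
  by_contra hne
  rcases eq_or_lt_of_le hu with h0 | hu'
  · simp [← h0] at heq hne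
    exact hne heq.symm
  · have hw' : 0 < w := lt_of_le_of_ne hw (Ne.symm (h (ne_of_gt hu')))
    have hne' : w / u ≠ 1 := by
      intro hc
      exact hne (by field_simp at hc; linarith)
    have hl : Real.log (w / u) < w / u - 1 := Real.log_lt_sub_one_of_pos (by positivity) hne'
    have hlog : Real.log (u / w) = -Real.log (w / u) := by
      rw [← Real.log_inv]; congr 1; field_simp
    rw [hlog] at heq
    have h2 := mul_lt_mul_of_pos_left hl hu'
    nlinarith [mul_div_cancel₀ w (ne_of_gt hu')]

lemma logsum_fin {A : Type} [Fintype A] (u v : A → ℝ)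
    (hu : ∀ a, 0 ≤ u a) (hv : ∀ a, 0 ≤ v a) (h : ∀ a, u a ≠ 0 → v a ≠ 0) :
    (∑ a, u a) * Real.log ((∑ a, u a) / (∑ a, v a)) ≤ ∑ a, u a * Real.log (u a / v a) ∧
    ((∑ a, u a * Real.log (u a / v a)) = (∑ a, u a) * Real.log ((∑ a, u a) / (∑ a, v a)) →
      ∀ a, u a * (∑ b, v b) = v a * (∑ b, u b)) := by
  set U := ∑ a, u a with hU
  set V := ∑ a, v a with hV
  have hU0 : 0 ≤ U := Finset.sum_nonneg fun a _ => hu a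
  have hV0 : 0 ≤ V := Finset.sum_nonneg fun a _ => hv a
  rcases eq_or_lt_of_le hU0 with hU1 | hU1
  · -- U = 0, hence all u a = 0
    have hua : ∀ a, u a = 0 := by
      intro a
      have := (Finset.sum_eq_zero_iff_of_nonneg (fun a _ => hu a)).mp hU1.symm
      exact this a (Finset.mem_univ a)
    constructor
    · simp [← hU1, hua]
    · intro _ a; simp [hua, ← hU1]
  · -- U > 0, hence V > 0
    have hVne : V ≠ 0 := by
      intro hc
      have hva : ∀ a, v a = 0 := by
        intro a
        exact (Finset.sum_eq_zero_iff_of_nonneg (fun a _ => hv a)).mp hc a (Finset.mem_univ a)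
      have : ∀ a, u a = 0 := fun a => by
        by_contra hne; exact h a hne (hva a)
      rw [hU] at hU1
      simp [this] at hU1
    have hV1 : 0 < V := lt_of_le_of_ne hV0 (Ne.symm hVne)
    set w : A → ℝ := fun a => v a * (U / V) with hwdef
    have hw0 : ∀ a, 0 ≤ w a := fun a => mul_nonneg (hv a) (by positivity)
    have hwne : ∀ a, u a ≠ 0 → w a ≠ 0 := by
      intro a hne
      have := h a hne
      have : 0 < v a := lt_of_le_of_ne (hv a) (Ne.symm this)
      positivity
    have hsplit : ∀ a, u a * Real.log (u a / v a)
        = u a * Real.log (u a / w a) + u a * Real.log (U / V) := by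
      intro a
      rcases eq_or_ne (u a) 0 with h0 | h0
      · simp [h0]
      · have hva : 0 < v a := lt_of_le_of_ne (hv a) (Ne.symm (h a h0))
        have hua : 0 < u a := lt_of_le_of_ne (hu a) (Ne.symm h0)
        have : u a / v a = (u a / w a) * (U / V) := by
          rw [hwdef]; field_simp
        rw [this, Real.log_mul (by rw [hwdef]; positivity) (by positivity), mul_add]
    have hsum : ∑ a, u a * Real.log (u a / v a)
        = (∑ a, u a * Real.log (u a / w a)) + U * Real.log (U / V) := by
      rw [Finset.sum_congr rfl (fun a _ => hsplit a), Finset.sum_add_distrib,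
        ← Finset.sum_mul]
    have hsw : ∑ a, w a = U := by
      rw [hwdef]; rw [← Finset.sum_mul]; field_simp; exact hV.symm
    have hterm : ∀ a, u a - w a ≤ u a * Real.log (u a / w a) :=
      fun a => gibbs_pt (hu a) (hw0 a) (hwne a)
    have hge : 0 ≤ ∑ a, u a * Real.log (u a / w a) := by
      have : ∑ a, (u a - w a) ≤ ∑ a, u a * Real.log (u a / w a) :=
        Finset.sum_le_sum fun a _ => hterm a
      rw [Finset.sum_sub_distrib, hsw] at this
      linarith [this, hU]
    constructor
    · linarith [hsum]
    · intro heq a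
      have hz : ∑ a, u a * Real.log (u a / w a) = 0 := by linarith [hsum]
      have : ∀ a ∈ Finset.univ, (u a - w a : ℝ) = u a * Real.log (u a / w a) := by
        rw [← Finset.sum_eq_sum_iff_of_le (fun a _ => hterm a)]
        rw [Finset.sum_sub_distrib, hsw, hz]; ring
      have := gibbs_pt_eq (hu a) (hw0 a) (hwne a) (this a (Finset.mem_univ a)).symm
      rw [this, hwdef]
      field_simp

lemma klnat_summable (u w : ℕ → ℝ) (hu : ∀ t, 0 ≤ u t) (hw : ∀ t, 0 ≤ w t)
    (hsu : Summable u) (hsw : Summable w) (C : ℝ) (hC : ∀ t, u t ≤ C * w t) :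
    Summable (fun t => u t * Real.log (u t / w t)) := by
  have key : ∀ t, |u t * Real.log (u t / w t)| ≤ u t * |Real.log C| + w t := by
    intro t
    rcases eq_or_lt_of_le (hu t) with h0 | h0
    · simp [← h0, hw t]
    · have hwt : 0 < w t := by
        rcases eq_or_lt_of_le (hw t) with h1 | h1
        · exfalso; have := hC t; rw [← h1] at this; simp at this; linarith
        · exact h1
      have hCpos : 0 < C := by
        have := hC t; nlinarith
      have hub : u t * Real.log (u t / w t) ≤ u t * |Real.log C| := by
        have h1 : u t / w t ≤ C := (div_le_iff₀ hwt).mpr (by linarith [hC t])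
        have h2 : Real.log (u t / w t) ≤ Real.log C := Real.log_le_log (by positivity) h1
        calc u t * Real.log (u t / w t) ≤ u t * Real.log C :=
              mul_le_mul_of_nonneg_left h2 (hu t)
          _ ≤ u t * |Real.log C| := mul_le_mul_of_nonneg_left (le_abs_self _) (hu t)
      have hlb : u t - w t ≤ u t * Real.log (u t / w t) :=
        gibbs_pt (hu t) (hw t) (fun _ => ne_of_gt hwt)
      rw [abs_le]
      constructor
      · have : -(u t * |Real.log C| + w t) ≤ u t - w t := by
          nlinarith [abs_nonneg (Real.log C), hu t]
        linarith
      · linarith [hw t]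
  have hg : Summable (fun t => u t * |Real.log C| + w t) :=
    Summable.add (by simpa [mul_comm] using hsu.mul_left |Real.log C|) hsw
  exact Summable.of_abs (Summable.of_nonneg_of_le (fun t => abs_nonneg _) key hg)

lemma klnat_key (u w : ℕ → ℝ) (hu : ∀ t, 0 ≤ u t) (hw : ∀ t, 0 ≤ w t)
    (hsu : Summable u) (hsw : Summable w) (hS : ∑' t, u t = ∑' t, w t)
    (C : ℝ) (hC : ∀ t, u t ≤ C * w t) :
    0 ≤ ∑' t, u t * Real.log (u t / w t) ∧
      ((∑' t, u t * Real.log (u t / w t)) = 0 → u = w) := by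
  have hne : ∀ t, u t ≠ 0 → w t ≠ 0 := by
    intro t h1 h2
    have := hC t
    rw [h2] at this; simp at this
    exact h1 (le_antisymm this (hu t))
  set f : ℕ → ℝ := fun t => u t * Real.log (u t / w t) with hf
  have hsf : Summable f := klnat_summable u w hu hw hsu hsw C hC
  set s : ℕ → ℝ := fun t => f t - (u t - w t) with hs
  have hs0 : ∀ t, 0 ≤ s t := fun t => by
    have := gibbs_pt (hu t) (hw t) (hne t); simp [hs, hf]; linarith
  have hss : Summable s := (hsf.sub hsu).add hsw |>.congr (by intro t; simp [hs]; ring)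
  have htsum : ∑' t, s t = ∑' t, f t := by
    have : ∑' t, s t = ∑' t, f t - (∑' t, u t - ∑' t, w t) := by
      rw [hs]
      rw [Summable.tsum_sub hsf (hsu.sub hsw), Summable.tsum_sub hsu hsw]
    rw [this, hS]; ring
  constructor
  · rw [← htsum]; exact tsum_nonneg hs0
  · intro h0
    have hz : ∑' t, s t = 0 := by rw [htsum, h0]
    have hsz : ∀ t, s t = 0 := by
      intro t
      by_contra hc
      have h1 : 0 < s t := lt_of_le_of_ne (hs0 t) (Ne.symm hc)
      have := Summable.le_tsum hss t (fun j _ => hs0 j)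
      rw [hz] at this
      linarith
    funext t
    have : f t = u t - w t := by have := hsz t; simp [hs] at this; linarith
    exact gibbs_pt_eq (hu t) (hw t) (hne t) this

section Key
variable {X Y : Type} [Fintype X] [Fintype Y]

lemma splitW_pos (p : X → Y → ℝ) (hp : ∀ x y, 0 ≤ p x y)
    (hX : ∀ x, margX p x ≠ 0) (hY : ∀ y, margY p y ≠ 0) (a : X × Y) :
    0 < splitW p a := by
  have h1 : 0 ≤ margX p a.1 := Finset.sum_nonneg fun y _ => hp a.1 y
  have h2 : 0 ≤ margY p a.2 := Finset.sum_nonneg fun x _ => hp x a.2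
  have h1' := lt_of_le_of_ne h1 (Ne.symm (hX a.1))
  have h2' := lt_of_le_of_ne h2 (Ne.symm (hY a.2))
  exact mul_pos h1' h2'

lemma channel_summable {A : Type} (q : A → ℕ → ℝ) (hq : IsChannelNat q) (a : A) :
    Summable (q a) := by
  by_contra h
  have := tsum_eq_zero_of_not_summable h
  rw [hq.2 a] at this
  norm_num at this

lemma key_step (p : X → Y → ℝ) (hp : IsJointDist p)
    (hX : ∀ x, margX p x ≠ 0) (hY : ∀ y, margY p y ≠ 0)
    (q : X × Y → ℕ → ℝ) (hq : IsChannelNat q)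
    (hconstraint : klNat (pushNat (jointW p) q) (pushNat (splitW p) q) = miXY p) :
    ∀ (t : ℕ) (a : X × Y), q a t ≠ 0 →
      jointW p a * pushNat (splitW p) q t = splitW p a * pushNat (jointW p) q t := by
  obtain ⟨hp0', _⟩ := hp
  have hp0 : ∀ a : X × Y, 0 ≤ jointW p a := fun a => hp0' a.1 a.2
  have hs_pos : ∀ a : X × Y, 0 < splitW p a := splitW_pos p hp0' hX hY
  have hq0 := hq.1
  have hq1 := hq.2
  have hqs : ∀ a, Summable (q a) := channel_summable q hq
  set Q : ℕ → ℝ := pushNat (jointW p) q with hQdef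
  set Qt : ℕ → ℝ := pushNat (splitW p) q with hQtdef
  have hQ0 : ∀ t, 0 ≤ Q t := fun t =>
    Finset.sum_nonneg fun a _ => mul_nonneg (hp0 a) (hq0 a t)
  have hQt0 : ∀ t, 0 ≤ Qt t := fun t =>
    Finset.sum_nonneg fun a _ => mul_nonneg (hs_pos a).le (hq0 a t)
  have hQsum : Summable Q := summable_sum fun a _ => (hqs a).mul_left _
  have hQtsum : Summable Qt := summable_sum fun a _ => (hqs a).mul_left _
  -- pointwise functions
  set f : ℕ → ℝ := fun t => ∑ a, (jointW p a * q a t) * Real.log (ratio p a) with hfdef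
  set g : ℕ → ℝ := fun t => Q t * Real.log (Q t / Qt t) with hgdef
  -- per-t log-sum inequality
  have hper : ∀ t, g t ≤ f t ∧
      (f t = g t → ∀ a, (jointW p a * q a t) * Qt t = (splitW p a * q a t) * Q t) := by
    intro t
    have hu : ∀ a : X × Y, 0 ≤ jointW p a * q a t :=
      fun a => mul_nonneg (hp0 a) (hq0 a t)
    have hv : ∀ a : X × Y, 0 ≤ splitW p a * q a t :=
      fun a => mul_nonneg (hs_pos a).le (hq0 a t)
    have himp : ∀ a : X × Y, jointW p a * q a t ≠ 0 → splitW p a * q a t ≠ 0 := by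
      intro a h
      have hqa : q a t ≠ 0 := fun hc => h (by rw [hc, mul_zero])
      exact mul_ne_zero (ne_of_gt (hs_pos a)) hqa
    obtain ⟨h1, h2⟩ := logsum_fin (fun a => jointW p a * q a t)
      (fun a => splitW p a * q a t) hu hv himp
    have heq : ∀ a : X × Y, (jointW p a * q a t) * Real.log ((jointW p a * q a t) / (splitW p a * q a t))
        = (jointW p a * q a t) * Real.log (ratio p a) := by
      intro a
      rcases eq_or_ne (jointW p a * q a t) 0 with h0 | h0
      · rw [h0, zero_mul, zero_mul]
      · have hqa : q a t ≠ 0 := fun hc => h0 (by rw [hc, mul_zero])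
        congr 1
        rw [mul_div_mul_right _ _ hqa]
        rfl
    constructor
    · calc g t = (∑ a, jointW p a * q a t) * Real.log ((∑ a, jointW p a * q a t) / (∑ a, splitW p a * q a t)) := rfl
        _ ≤ ∑ a, (jointW p a * q a t) * Real.log ((jointW p a * q a t) / (splitW p a * q a t)) := h1
        _ = f t := Finset.sum_congr rfl fun a _ => heq a
    · intro hfg a
      apply h2
      have hstep : (∑ a : X × Y, jointW p a * q a t * Real.log (jointW p a * q a t / (splitW p a * q a t)))
          = f t := Finset.sum_congr rfl fun a _ => heq a
      rw [hstep]
      exact hfg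
    -- end hper
  -- summability of f and g, and their tsums
  have hfsum : Summable f := by
    apply summable_sum
    intro a _
    have : Summable (fun t => (jointW p a * Real.log (ratio p a)) * q a t) :=
      (hqs a).mul_left _
    exact this.congr (by intro t; ring)
  have hftsum : ∑' t, f t = miXY p := by
    rw [hfdef]
    rw [Summable.tsum_finsetSum (fun a _ => ((hqs a).mul_left (jointW p a * Real.log (ratio p a))).congr
      (by intro t; ring))]
    have : ∀ a : X × Y, ∑' t, (jointW p a * q a t) * Real.log (ratio p a)
        = jointW p a * Real.log (ratio p a) := by
      intro a
      have : ∀ t, (jointW p a * q a t) * Real.log (ratio p a)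
          = (jointW p a * Real.log (ratio p a)) * q a t := by intro t; ring
      rw [tsum_congr this, tsum_mul_left, hq1 a, mul_one]
    rw [Finset.sum_congr rfl fun a _ => this a]
    exact Fintype.sum_prod_type (fun a : X × Y => jointW p a * Real.log (ratio p a))
  have hC : ∀ t, Q t ≤ (∑ a, jointW p a / splitW p a) * Qt t := by
    intro t
    rw [hQdef, hQtdef, pushNat, pushNat, Finset.sum_mul]
    apply Finset.sum_le_sum
    intro a _
    calc jointW p a * q a t = (jointW p a / splitW p a) * (splitW p a * q a t) := by
          field_simp [ne_of_gt (hs_pos a)]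
      _ ≤ (jointW p a / splitW p a) * (∑ b, splitW p b * q b t) := by
          apply mul_le_mul_of_nonneg_left _ (div_nonneg (hp0 a) (hs_pos a).le)
          exact Finset.single_le_sum (fun b _ => mul_nonneg (hs_pos b).le (hq0 b t))
            (Finset.mem_univ a)
  have hgsum : Summable g := klnat_summable Q Qt hQ0 hQt0 hQsum hQtsum _ hC
  have hgtsum : ∑' t, g t = miXY p := hconstraint
  -- slack
  set s : ℕ → ℝ := fun t => f t - g t with hsdef
  have hs0 : ∀ t, 0 ≤ s t := fun t => by simp [hsdef]; exact (hper t).1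
  have hssum : Summable s := hfsum.sub hgsum
  have hstsum : ∑' t, s t = 0 := by
    rw [hsdef, Summable.tsum_sub hfsum hgsum, hftsum, hgtsum, sub_self]
  have hsz : ∀ t, s t = 0 := by
    intro t
    by_contra hc
    have h1 : 0 < s t := lt_of_le_of_ne (hs0 t) (Ne.symm hc)
    have := Summable.le_tsum hssum t (fun j _ => hs0 j)
    rw [hstsum] at this
    linarith
  -- conclude
  intro t a hqa
  have hfg : f t = g t := by have := hsz t; simp [hsdef] at this; linarith
  have := (hper t).2 hfg a
  have h2 : q a t * (jointW p a * Qt t) = q a t * (splitW p a * Q t) := by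
    ring_nf at this ⊢
    linarith [this]
  exact mul_left_cancel₀ hqa h2
end Key

/-- Let `q(T|X,Y)` satisfy `D(q(T) ‖ q̃(T)) = I(X;Y)` and let `q'`
be as above. Then: (i) for `(x,y) ∈ S`, `q(T_j^q|x,y) = δ_{(x,y) ∈ S_j}`;
(ii) `q'(T) = q(T)`; (iii) `T_j^{q'} = T_j^q` for all `j`;
(iv) `I_q(X,Y;T) ≥ I_{q'}(X,Y;T)`, with equality iff `q = q'`. -/
theorem qprime_properties {X Y : Type} [Fintype X] [Fintype Y]
    (p : X → Y → ℝ) (hp : IsJointDist p)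
    (hX : ∀ x, margX p x ≠ 0) (hY : ∀ y, margY p y ≠ 0)
    (n : ℕ) (idx : X × Y → Fin n)
    (hsurj : ∀ j : Fin n, ∃ a : X × Y, jointW p a ≠ 0 ∧ idx a = j)
    (hidx : ∀ a b : X × Y, jointW p a ≠ 0 → jointW p b ≠ 0 →
      (idx a = idx b ↔ ratio p a = ratio p b))
    (q : X × Y → ℕ → ℝ) (hq : IsChannelNat q)
    (hconstraint : klNat (pushNat (jointW p) q) (pushNat (splitW p) q) = miXY p) :
    (∀ a : X × Y, jointW p a ≠ 0 → ∀ j : Fin n,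
        condMassTj p idx q a j = if idx a = j then 1 else 0) ∧
    (∀ t : ℕ, pushNat (jointW p) (qprime p idx q) t = pushNat (jointW p) q t) ∧
    (∀ j : Fin n, TjSet p idx (qprime p idx q) j = TjSet p idx q j) ∧
    (miNat (jointW p) (qprime p idx q) ≤ miNat (jointW p) q ∧
      (miNat (jointW p) q = miNat (jointW p) (qprime p idx q) ↔ q = qprime p idx q)) := by
  obtain ⟨hp0', hp1⟩ := hp
  have hp0 : ∀ a : X × Y, 0 ≤ jointW p a := fun a => hp0' a.1 a.2
  have hs_pos : ∀ a : X × Y, 0 < splitW p a := splitW_pos p hp0' hX hY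
  have hq0 := hq.1
  have hq1 := hq.2
  have hqs : ∀ a, Summable (q a) := channel_summable q hq
  have KEY := key_step p ⟨hp0', hp1⟩ hX hY q hq hconstraint
  set Q : ℕ → ℝ := pushNat (jointW p) q with hQdef
  set Qt : ℕ → ℝ := pushNat (splitW p) q with hQtdef
  have hQ0 : ∀ t, 0 ≤ Q t := fun t =>
    Finset.sum_nonneg fun a _ => mul_nonneg (hp0 a) (hq0 a t)
  have hQsum : Summable Q := summable_sum fun a _ => (hqs a).mul_left _
  -- if q a t ≠ 0 then p a * q a t ≤ Q t
  have hle : ∀ (a : X × Y) (t : ℕ), jointW p a * q a t ≤ Q t := fun a t =>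
    Finset.single_le_sum (fun b _ => mul_nonneg (hp0 b) (hq0 b t)) (Finset.mem_univ a)
  -- KEY1
  have KEY1 : ∀ (t : ℕ) (a : X × Y), q a t ≠ 0 → Q t ≠ 0 →
      jointW p a ≠ 0 ∧ ratio p a = Q t / Qt t := by
    intro t a hqa hQt
    have hk := KEY t a hqa
    have hQpos : 0 < Q t := lt_of_le_of_ne (hQ0 t) (Ne.symm hQt)
    have hrhs : 0 < splitW p a * Q t := mul_pos (hs_pos a) hQpos
    rw [← hk] at hrhs
    have hQtpos : 0 < Qt t := by
      rcases le_or_gt (Qt t) 0 with h | h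
      · exfalso; nlinarith [hp0 a]
      · exact h
    have hpa : jointW p a ≠ 0 := by
      intro hc; rw [hc, zero_mul] at hrhs; exact lt_irrefl 0 hrhs
    refine ⟨hpa, ?_⟩
    have : ratio p a = jointW p a / splitW p a := rfl
    rw [this]
    rw [div_eq_div_iff (hs_pos a).ne' hQtpos.ne']
    linarith [hk]
  -- membership implies Q positive
  have hTQ : ∀ (j : Fin n) (t : ℕ), t ∈ TjSet p idx q j → 0 < Q t := by
    rintro j t ⟨a, ha, -, hpos⟩
    have h1 : 0 < jointW p a := lt_of_le_of_ne (hp0 a) (Ne.symm ha)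
    calc (0:ℝ) < jointW p a * q a t := mul_pos h1 hpos
      _ ≤ Q t := hle a t
  -- membership
  have hmem : ∀ (a : X × Y) (t : ℕ), jointW p a ≠ 0 → q a t ≠ 0 →
      t ∈ TjSet p idx q (idx a) := by
    intro a t ha hqa
    exact ⟨a, ha, rfl, lt_of_le_of_ne (hq0 a t) (Ne.symm hqa)⟩
  -- uniqueness of the class
  have huniq : ∀ (j k : Fin n) (t : ℕ), t ∈ TjSet p idx q j → t ∈ TjSet p idx q k → j = k := by
    rintro j k t ⟨a, ha, hja, hpa⟩ ⟨b, hb, hjb, hpb⟩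
    have hQt : Q t ≠ 0 := (hTQ j t ⟨a, ha, hja, hpa⟩).ne'
    have h1 := KEY1 t a (ne_of_gt hpa) hQt
    have h2 := KEY1 t b (ne_of_gt hpb) hQt
    rw [← hja, ← hjb]
    exact (hidx a b ha hb).mpr (by rw [h1.2, h2.2])
  -- Part (i)
  have part1 : ∀ a : X × Y, jointW p a ≠ 0 → ∀ j : Fin n,
      condMassTj p idx q a j = if idx a = j then 1 else 0 := by
    intro a ha j
    by_cases hj : idx a = j
    · rw [if_pos hj]
      have : Set.indicator (TjSet p idx q j) (q a) = q a := by
        funext t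
        rcases eq_or_ne (q a t) 0 with h0 | h0
        · by_cases hm : t ∈ TjSet p idx q j
          · rw [Set.indicator_of_mem hm, h0]
          · rw [Set.indicator_of_notMem hm, h0]
        · exact Set.indicator_of_mem (hj ▸ hmem a t ha h0) (q a)
      rw [condMassTj, this, hq1 a]
    · rw [if_neg hj]
      have : Set.indicator (TjSet p idx q j) (q a) = fun _ => (0:ℝ) := by
        funext t
        by_cases hm : t ∈ TjSet p idx q j
        · rw [Set.indicator_of_mem hm]
          by_contra h0
          exact hj (huniq (idx a) j t (hmem a t ha h0) hm)
        · exact Set.indicator_of_notMem hm (q a)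
      rw [condMassTj, this, tsum_zero]
  -- Mass of T_j equals total p-mass of class j
  have hindicQ : ∀ (j : Fin n) (t : ℕ), Set.indicator (TjSet p idx q j) Q t
      = ∑ a, jointW p a * Set.indicator (TjSet p idx q j) (q a) t := by
    intro j t
    by_cases hm : t ∈ TjSet p idx q j
    · rw [Set.indicator_of_mem hm]
      rw [Finset.sum_congr rfl (fun a _ => by rw [Set.indicator_of_mem hm])]
      rfl
    · rw [Set.indicator_of_notMem hm]
      rw [Finset.sum_congr rfl (fun a _ => by rw [Set.indicator_of_notMem hm, mul_zero])]
      rw [Finset.sum_const_zero]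
  have hindic_sum : ∀ (j : Fin n) (a : X × Y),
      Summable (Set.indicator (TjSet p idx q j) (q a)) := fun j a => (hqs a).indicator _
  have hM : ∀ j : Fin n, TjMass p idx q j
      = ∑ a, jointW p a * (if idx a = j then 1 else 0) := by
    intro j
    rw [TjMass]
    rw [tsum_congr (hindicQ j)]
    rw [Summable.tsum_finsetSum (fun a _ => ((hindic_sum j a).mul_left (jointW p a)))]
    apply Finset.sum_congr rfl
    intro a _
    rw [tsum_mul_left]
    rcases eq_or_ne (jointW p a) 0 with h0 | h0
    · rw [h0, zero_mul, zero_mul]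
    · rw [show ∑' t, Set.indicator (TjSet p idx q j) (q a) t = condMassTj p idx q a j from rfl]
      rw [part1 a h0 j]
  have hMpos : ∀ j : Fin n, 0 < TjMass p idx q j := by
    intro j
    obtain ⟨a, ha, hja⟩ := hsurj j
    rw [hM j]
    have h1 : (0:ℝ) < jointW p a * (if idx a = j then 1 else 0) := by
      rw [if_pos hja, mul_one]
      exact lt_of_le_of_ne (hp0 a) (Ne.symm ha)
    calc (0:ℝ) < jointW p a * (if idx a = j then 1 else 0) := h1
      _ ≤ ∑ b, jointW p b * (if idx b = j then 1 else 0) := by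
        apply Finset.single_le_sum (f := fun b => jointW p b * (if idx b = j then 1 else 0))
          ?_ (Finset.mem_univ a)
        intro b _
        show (0:ℝ) ≤ jointW p b * (if idx b = j then 1 else 0)
        by_cases h : idx b = j
        · rw [if_pos h, mul_one]; exact hp0 b
        · rw [if_neg h, mul_zero]
  -- gamma facts
  have hgamma_val : ∀ (j : Fin n) (t : ℕ), t ∈ TjSet p idx q j →
      gammaq p idx q j t = Q t / TjMass p idx q j := fun j t hm => Set.indicator_of_mem hm _
  have hgamma_zero : ∀ (j : Fin n) (t : ℕ), t ∉ TjSet p idx q j →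
      gammaq p idx q j t = 0 := fun j t hm => Set.indicator_of_notMem hm _
  have hgamma_nonneg : ∀ (j : Fin n) (t : ℕ), 0 ≤ gammaq p idx q j t := by
    intro j t
    by_cases hm : t ∈ TjSet p idx q j
    · rw [hgamma_val j t hm]; exact div_nonneg (hQ0 t) (hMpos j).le
    · rw [hgamma_zero j t hm]
  have hgamma_pos : ∀ (j : Fin n) (t : ℕ), t ∈ TjSet p idx q j →
      0 < gammaq p idx q j t := by
    intro j t hm
    rw [hgamma_val j t hm]
    exact div_pos (hTQ j t hm) (hMpos j)
  have hgamma_eq : ∀ (j : Fin n) (t : ℕ),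
      gammaq p idx q j t = Set.indicator (TjSet p idx q j) Q t / TjMass p idx q j := by
    intro j t
    by_cases hm : t ∈ TjSet p idx q j
    · rw [hgamma_val j t hm, Set.indicator_of_mem hm]
    · rw [hgamma_zero j t hm, Set.indicator_of_notMem hm, zero_div]
  have hgamma_summable : ∀ j : Fin n, Summable (gammaq p idx q j) := by
    intro j
    apply Summable.congr (((hQsum.indicator _).div_const (TjMass p idx q j)))
    intro t
    rw [hgamma_eq]
  have hgamma_tsum : ∀ j : Fin n, ∑' t, gammaq p idx q j t = 1 := by
    intro j
    rw [tsum_congr (fun t => hgamma_eq j t)]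
    rw [tsum_div_const]
    rw [show ∑' t, Set.indicator (TjSet p idx q j) Q t = TjMass p idx q j from rfl]
    exact div_self (hMpos j).ne'
  -- qprime collapse on the support
  have hq'eq : ∀ a : X × Y, jointW p a ≠ 0 → ∀ t : ℕ,
      qprime p idx q a t = gammaq p idx q (idx a) t := by
    intro a ha t
    rw [qprime, if_pos ha]
    rw [Finset.sum_congr rfl (fun j _ => by rw [part1 a ha j])]
    simp
  have hq'eq' : ∀ a : X × Y, jointW p a = 0 → ∀ t : ℕ, qprime p idx q a t = q a t := by
    intro a ha t
    rw [qprime, if_neg (by simpa using ha)]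
  -- Part (ii)
  have part2 : ∀ t : ℕ, pushNat (jointW p) (qprime p idx q) t = Q t := by
    intro t
    have hstep1 : pushNat (jointW p) (qprime p idx q) t
        = ∑ a, jointW p a * gammaq p idx q (idx a) t := by
      apply Finset.sum_congr rfl
      intro a _
      rcases eq_or_ne (jointW p a) 0 with h0 | h0
      · rw [h0, zero_mul, zero_mul]
      · rw [hq'eq a h0 t]
    have hstep2 : ∑ a, jointW p a * gammaq p idx q (idx a) t
        = ∑ j, Set.indicator (TjSet p idx q j) Q t := by
      rw [← Finset.sum_fiberwise Finset.univ idx (fun a => jointW p a * gammaq p idx q (idx a) t)]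
      apply Finset.sum_congr rfl
      intro j _
      have : ∀ a ∈ Finset.filter (fun a => idx a = j) Finset.univ,
          jointW p a * gammaq p idx q (idx a) t
          = jointW p a * (if idx a = j then 1 else 0) * (Set.indicator (TjSet p idx q j) Q t / TjMass p idx q j) := by
        intro a hmem'
        have hja : idx a = j := (Finset.mem_filter.mp hmem').2
        rw [hja, if_pos rfl, mul_one, hgamma_eq]
      rw [Finset.sum_congr rfl this, ← Finset.sum_mul]
      have : ∑ a ∈ Finset.filter (fun a => idx a = j) Finset.univ,
          jointW p a * (if idx a = j then 1 else 0)
          = ∑ a, jointW p a * (if idx a = j then 1 else 0) := by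
        apply Finset.sum_subset (Finset.filter_subset _ _)
        intro a _ hna
        rw [if_neg (by simpa using hna), mul_zero]
      rw [this, ← hM j, mul_div_assoc', mul_comm, mul_div_assoc, div_self (hMpos j).ne', mul_one]
    rw [hstep1, hstep2]
    rcases eq_or_ne (Q t) 0 with h0 | h0
    · rw [h0]
      apply Finset.sum_eq_zero
      intro j _
      by_cases hm : t ∈ TjSet p idx q j
      · exact absurd h0 (hTQ j t hm).ne'
      · exact Set.indicator_of_notMem hm Q
    · have hex : ∃ a : X × Y, jointW p a ≠ 0 ∧ q a t ≠ 0 := by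
        by_contra hc
        push_neg at hc
        apply h0
        apply Finset.sum_eq_zero
        intro a _
        rcases eq_or_ne (jointW p a) 0 with h1 | h1
        · rw [h1, zero_mul]
        · rw [hc a h1, mul_zero]
      obtain ⟨a, ha, hqa⟩ := hex
      have hm0 : t ∈ TjSet p idx q (idx a) := hmem a t ha hqa
      rw [Finset.sum_eq_single (idx a)]
      · exact Set.indicator_of_mem hm0 Q
      · intro j _ hj
        apply Set.indicator_of_notMem
        intro hm
        exact hj (huniq j (idx a) t hm hm0)
      · intro h; exact absurd (Finset.mem_univ _) h
  -- Part (iii)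
  have hq'pos : ∀ a : X × Y, jointW p a ≠ 0 → ∀ t : ℕ,
      (0 < qprime p idx q a t ↔ t ∈ TjSet p idx q (idx a)) := by
    intro a ha t
    rw [hq'eq a ha t]
    constructor
    · intro h
      by_contra hm
      rw [hgamma_zero _ _ hm] at h
      exact lt_irrefl 0 h
    · exact hgamma_pos (idx a) t
  have part3 : ∀ j : Fin n, TjSet p idx (qprime p idx q) j = TjSet p idx q j := by
    intro j
    ext t
    constructor
    · rintro ⟨a, ha, hja, hpos⟩
      have := (hq'pos a ha t).mp hpos
      rwa [hja] at this
    · intro ht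
      obtain ⟨a, ha, hja, hpos⟩ := ht
      exact ⟨a, ha, hja, (hq'pos a ha t).mpr (by rw [hja]; exact ⟨a, ha, hja, hpos⟩)⟩
  -- Part (iv)
  have hmiq' : miNat (jointW p) (qprime p idx q)
      = ∑ a, -(jointW p a * Real.log (TjMass p idx q (idx a))) := by
    rw [miNat]
    apply Finset.sum_congr rfl
    intro a _
    have hrw : ∀ t : ℕ, jointW p a * qprime p idx q a t *
          Real.log (qprime p idx q a t / pushNat (jointW p) (qprime p idx q) t)
        = jointW p a * qprime p idx q a t * Real.log (qprime p idx q a t / Q t) := by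
      intro t; rw [part2 t]
    rw [tsum_congr hrw]
    rcases eq_or_ne (jointW p a) 0 with h0 | h0
    · rw [h0]; simp
    · have hterm : ∀ t : ℕ, jointW p a * qprime p idx q a t * Real.log (qprime p idx q a t / Q t)
          = (jointW p a * (-(Real.log (TjMass p idx q (idx a))))) * gammaq p idx q (idx a) t := by
        intro t
        rw [hq'eq a h0 t]
        by_cases hm : t ∈ TjSet p idx q (idx a)
        · have hQt := hTQ _ t hm
          have hMt := hMpos (idx a)
          rw [hgamma_val _ _ hm]
          have hd : (Q t / TjMass p idx q (idx a)) / Q t = (TjMass p idx q (idx a))⁻¹ := by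
            field_simp
          rw [hd, Real.log_inv]
          ring
        · rw [hgamma_zero _ _ hm]; simp
      rw [tsum_congr hterm, tsum_mul_left, hgamma_tsum, mul_one]
      ring
  have hmiq : miNat (jointW p) q
      = ∑ a, jointW p a * ∑' t, q a t * Real.log (q a t / Q t) := by
    rw [miNat]
    apply Finset.sum_congr rfl
    intro a _
    rw [← tsum_mul_left]
    apply tsum_congr
    intro t
    rw [← hQdef]
    ring
  have hKL : ∀ a : X × Y, jointW p a ≠ 0 →
      ((∑' t, q a t * Real.log (q a t / Q t))
        = (∑' t, q a t * Real.log (q a t / gammaq p idx q (idx a) t))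
            - Real.log (TjMass p idx q (idx a))) ∧
      0 ≤ (∑' t, q a t * Real.log (q a t / gammaq p idx q (idx a) t)) ∧
      ((∑' t, q a t * Real.log (q a t / gammaq p idx q (idx a) t)) = 0 →
        q a = gammaq p idx q (idx a)) := by
    intro a ha
    have hpa : 0 < jointW p a := lt_of_le_of_ne (hp0 a) (Ne.symm ha)
    have hMt := hMpos (idx a)
    have hCbound : ∀ t, q a t ≤ (TjMass p idx q (idx a) / jointW p a) * gammaq p idx q (idx a) t := by
      intro t
      rcases eq_or_ne (q a t) 0 with h0 | h0
      · rw [h0]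
        exact mul_nonneg (div_nonneg hMt.le hpa.le) (hgamma_nonneg _ t)
      · have hm : t ∈ TjSet p idx q (idx a) := hmem a t ha h0
        rw [hgamma_val _ _ hm]
        have hd : (TjMass p idx q (idx a) / jointW p a) * (Q t / TjMass p idx q (idx a))
            = Q t / jointW p a := by field_simp
        rw [hd, le_div_iff₀ hpa]
        calc q a t * jointW p a = jointW p a * q a t := mul_comm _ _
          _ ≤ Q t := hle a t
    have hkey := klnat_key (q a) (gammaq p idx q (idx a)) (hq0 a) (hgamma_nonneg (idx a))
      (hqs a) (hgamma_summable (idx a)) (by rw [hq1 a, hgamma_tsum (idx a)]) _ hCbound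
    have hsum1 : Summable (fun t => q a t * Real.log (q a t / gammaq p idx q (idx a) t)) :=
      klnat_summable (q a) (gammaq p idx q (idx a)) (hq0 a) (hgamma_nonneg (idx a))
        (hqs a) (hgamma_summable (idx a)) _ hCbound
    have hdec : ∀ t : ℕ, q a t * Real.log (q a t / Q t)
        = q a t * Real.log (q a t / gammaq p idx q (idx a) t)
          + q a t * (-(Real.log (TjMass p idx q (idx a)))) := by
      intro t
      rcases eq_or_ne (q a t) 0 with h0 | h0
      · rw [h0]; ring
      · have hm : t ∈ TjSet p idx q (idx a) := hmem a t ha h0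
        have hQt := hTQ _ t hm
        have hqpos : 0 < q a t := lt_of_le_of_ne (hq0 a t) (Ne.symm h0)
        have hgpos : 0 < gammaq p idx q (idx a) t := hgamma_pos _ t hm
        have harg : q a t / Q t = (q a t / gammaq p idx q (idx a) t) * (TjMass p idx q (idx a))⁻¹ := by
          rw [hgamma_val _ _ hm]
          field_simp
        rw [harg, Real.log_mul (by positivity) (by positivity), Real.log_inv, mul_add]
    constructor
    · rw [tsum_congr hdec, Summable.tsum_add hsum1 ((hqs a).mul_right _), tsum_mul_right, hq1 a, one_mul]
      ring
    · exact hkey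
  have hfinal : miNat (jointW p) q - miNat (jointW p) (qprime p idx q)
      = ∑ a, jointW p a * (∑' t, q a t * Real.log (q a t / gammaq p idx q (idx a) t)) := by
    rw [hmiq, hmiq', ← Finset.sum_sub_distrib]
    apply Finset.sum_congr rfl
    intro a _
    rcases eq_or_ne (jointW p a) 0 with h0 | h0
    · rw [h0]; ring
    · rw [(hKL a h0).1]; ring
  have hterm_nonneg : ∀ a : X × Y,
      0 ≤ jointW p a * (∑' t, q a t * Real.log (q a t / gammaq p idx q (idx a) t)) := by
    intro a
    rcases eq_or_ne (jointW p a) 0 with h0 | h0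
    · rw [h0, zero_mul]
    · exact mul_nonneg (hp0 a) (hKL a h0).2.1
  have hineq : miNat (jointW p) (qprime p idx q) ≤ miNat (jointW p) q := by
    have := Finset.sum_nonneg (fun a (_ : a ∈ Finset.univ) => hterm_nonneg a)
    linarith [hfinal.symm ▸ this]
  refine ⟨part1, part2, part3, hineq, ?_, fun h => congrArg (miNat (jointW p)) h⟩
  intro heq
  have hzero : ∑ a, jointW p a * (∑' t, q a t * Real.log (q a t / gammaq p idx q (idx a) t)) = 0 := by
    rw [← hfinal, heq, sub_self]
  have hallz := (Finset.sum_eq_zero_iff_of_nonneg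
    (fun a (_ : a ∈ Finset.univ) => hterm_nonneg a)).mp hzero
  funext a t
  rcases eq_or_ne (jointW p a) 0 with h0 | h0
  · rw [hq'eq' a h0 t]
  · have hpa : 0 < jointW p a := lt_of_le_of_ne (hp0 a) (Ne.symm h0)
    have := hallz a (Finset.mem_univ a)
    have hKLz : (∑' t, q a t * Real.log (q a t / gammaq p idx q (idx a) t)) = 0 := by
      rcases mul_eq_zero.mp this with h | h
      · exact absurd h h0
      · exact h
    have hfun := (hKL a h0).2.2 hKLz
    rw [hq'eq a h0 t, ← hfun]
end
end

section
/- Assume the marginals p(X) and p(Y) are fully supported and p(Y) is the uniform distribution on Y. Then a pair (σ,τ) of bijections of X and Y is an equivariance of the channel p(Y|X) if and only if (x,y) ~ (σ(x),τ(y)) for all (x,y) ∈ X×Y, i.e. p(x,y)/(p(x)p(y)) = p(σ(x),τ(y))/(p(σ(x))p(τ(y))) for all (x,y). -/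
noncomputable section

/-- Assume the marginals `p(X)` and `p(Y)` are fully supported and
`p(Y)` is uniform on `Y`. Then `(σ,τ)` is an equivariance of the conditional channel
`p(Y|X)` (i.e. `p(τ y|σ x) = p(y|x)` with `p(y|x) = p(x,y)/p(x)`) if and only if
`(x,y) ∼ (σ x, τ y)` for all `(x,y)`, i.e.
`p(x,y)/(p(x)p(y)) = p(σ x, τ y)/(p(σ x) p(τ y))`. -/
theorem equivariance_iff_equivalence {X Y : Type} [Fintype X] [Fintype Y]
    (p : X → Y → ℝ) (hp : IsJointDist p)
    (hX : ∀ x, margX p x ≠ 0) (hY : ∀ y, margY p y ≠ 0)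
    (hunif : ∀ y : Y, margY p y = (Fintype.card Y : ℝ)⁻¹)
    (σ : Equiv.Perm X) (τ : Equiv.Perm Y) :
    (∀ x y, p (σ x) (τ y) / margX p (σ x) = p x y / margX p x) ↔
      (∀ x y, p x y / (margX p x * margY p y) =
        p (σ x) (τ y) / (margX p (σ x) * margY p (τ y))) := by
  constructor
  · intro h x y
    rw [div_mul_eq_div_div, div_mul_eq_div_div, h, hunif, hunif]
  · intro h x y
    have := h x y
    rw [div_mul_eq_div_div, div_mul_eq_div_div, hunif, hunif] at this
    have hc : ((Fintype.card Y : ℝ)⁻¹) ≠ 0 := by simpa [hunif y] using hY y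
    have hcard : (Fintype.card Y : ℝ) ≠ 0 := by
      intro h0; exact hc (by simp [h0])
    field_simp at this
    rw [div_eq_div_iff (hX x) (hX (σ x))] at this
    rw [div_eq_div_iff (hX (σ x)) (hX x)]
    have h2 := this
    linarith
end
end
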